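/- arXiv:1304.2483 — 2 statements merged into one kernel-verified Lean document; each statement's English description precedes it below -/
import Mathlib

section
/- Let f = (f_n(k)) (n ≥ 1, 1 ≤ k ≤ 2n−1) be a family of rational numbers satisfying the finite difference system (1.2) together with the initial conditions [tan1]. Then for every n ≥ 1, the row sum equals the tangent number: Σ_{k=1}^{2n−1} f_n(k) = T_{2n−1}. -/
open scoped BigOperators

/-- `σ` is an alternating (down-up) permutation of `{1,…,n}` (written 0-indexed):
`σ(1) > σ(2) < σ(3) > σ(4) < ⋯` in the 1-indexed notation of the paper. -/
def IsAlternating {n : ℕ} (σ : Equiv.Perm (Fin n)) : Prop :=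
  ∀ i : ℕ, ∀ h : i + 1 < n,
    if i % 2 = 0 then (σ ⟨i + 1, h⟩ : ℕ) < (σ ⟨i, by omega⟩ : ℕ)
    else (σ ⟨i, by omega⟩ : ℕ) < (σ ⟨i + 1, h⟩ : ℕ)

/-- The value (in `{1,…,n}`) of the permutation `σ` at the 1-based position `j`,
with the convention that positions outside `{1,…,n}` carry the value `0`. -/
def posVal {n : ℕ} (σ : Equiv.Perm (Fin n)) (j : ℕ) : ℕ :=
  if h : 1 ≤ j ∧ j ≤ n then (σ ⟨j - 1, by omega⟩ : ℕ) + 1 else 0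

/-- `grn σ`: the greater neighbor of the maximum value `n` in `σ`. -/
def grn : {n : ℕ} → Equiv.Perm (Fin n) → ℕ
  | 0, _ => 0
  | (m + 1), σ =>
      max (posVal σ (((σ.symm (Fin.last m) : ℕ) + 1) - 1))
          (posVal σ (((σ.symm (Fin.last m) : ℕ) + 1) + 1))

/-- The set `𝔄_n` of alternating permutations of length `n`. -/
def altA (n : ℕ) : Set (Equiv.Perm (Fin n)) := {σ | IsAlternating σ}

/-- The set `𝔄_{n,k} = {σ ∈ 𝔄_n : grn σ = k}`. -/
def altAk (n k : ℕ) : Set (Equiv.Perm (Fin n)) := {σ | IsAlternating σ ∧ grn σ = k}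

/-- The tangent numbers, defined by `tan u = Σ_{n≥0} T_{2n+1} u^{2n+1}/(2n+1)!`;
`tangentNumber m` is the `m`-th Taylor coefficient of `tan` at `0`, times `m!`. -/
noncomputable def tangentNumber (m : ℕ) : ℝ := iteratedDeriv m Real.tan 0

/-- The secant numbers, defined by `sec u = 1/cos u = Σ_{n≥0} E_{2n} u^{2n}/(2n)!`;
`secantNumber m` is the `m`-th Taylor coefficient of `sec` at `0`, times `m!`. -/
noncomputable def secantNumber (m : ℕ) : ℝ := iteratedDeriv m (fun u => 1 / Real.cos u) 0

/-- The finite difference system (1.2):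
`f_n(k+2) − 2 f_n(k+1) + f_n(k) + 4 f_{n−1}(k) = 0` for `n ≥ 2`, `1 ≤ k ≤ 2n−3`. -/
def SatisfiesFD (f : ℕ → ℕ → ℚ) : Prop :=
  ∀ n, 2 ≤ n → ∀ k, 1 ≤ k → k ≤ 2 * n - 3 →
    f n (k + 2) - 2 * f n (k + 1) + f n k + 4 * f (n - 1) k = 0

/-- Initial conditions [tan1]. -/
def Tan1 (f : ℕ → ℕ → ℚ) : Prop :=
  f 1 1 = 1 ∧ ∀ n, 2 ≤ n →
    f n 1 = 0 ∧ f n 2 = 2 * ∑ k ∈ Finset.Icc 1 (2 * n - 3), f (n - 1) k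

/-- Initial conditions [sec1]. -/
def Sec1 (f : ℕ → ℕ → ℚ) : Prop :=
  f 1 1 = 1 ∧ ∀ n, 2 ≤ n →
    f n 1 = ∑ k ∈ Finset.Icc 1 (2 * n - 3), f (n - 1) k ∧
    f n 2 = 3 * ∑ k ∈ Finset.Icc 1 (2 * n - 3), f (n - 1) k

section Aux
open Real Set Filter Finset


lemma sum_range_even_odd (N : ℕ) (h : ℕ → ℝ) :
    ∑ k ∈ range (2*N), h k = ∑ m ∈ range N, h (2*m) + ∑ m ∈ range N, h (2*m+1) := by
  induction N with
  | zero => simp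
  | succ N ih =>
    rw [show 2*(N+1) = (2*N+1)+1 by ring, Finset.sum_range_succ, Finset.sum_range_succ,
      ih, Finset.sum_range_succ, Finset.sum_range_succ]
    ring

lemma cos_odd_half (r : ℕ) : Real.cos ((2*r+1 : ℕ) * (π/2)) = 0 := by
  rw [show ((2*r+1:ℕ):ℝ) * (π/2) = r*π + π/2 by push_cast; ring, Real.cos_add_pi_div_two,
    Real.sin_nat_mul_pi]
  ring

lemma cos_even_half (r : ℕ) : Real.cos ((2*r : ℕ) * (π/2)) = (-1:ℝ)^r := by
  have := Real.cos_nat_mul_pi_sub 0 r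
  rw [sub_zero, Real.cos_zero, mul_one] at this
  rw [show ((2*r:ℕ):ℝ) * (π/2) = r*π by push_cast; ring, this]

lemma sin_odd_half (r : ℕ) : Real.sin ((2*r+1 : ℕ) * (π/2)) = (-1:ℝ)^r := by
  have := Real.cos_nat_mul_pi_sub 0 r
  rw [sub_zero, Real.cos_zero, mul_one] at this
  rw [show ((2*r+1:ℕ):ℝ) * (π/2) = r*π + π/2 by push_cast; ring, Real.sin_add_pi_div_two, this]

lemma hd_cos_affine (c u : ℝ) : HasDerivAt (fun y : ℝ => Real.cos (2*y + c)) (-Real.sin (2*u+c) * 2) u := by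
  have h1 : HasDerivAt (fun y : ℝ => 2*y + c) 2 u := by
    simpa using ((hasDerivAt_id u).const_mul 2).add_const c
  exact (Real.hasDerivAt_cos (2*u+c)).comp u h1

lemma hd_sin_affine (c u : ℝ) : HasDerivAt (fun y : ℝ => Real.sin (2*y + c)) (Real.cos (2*u+c) * 2) u := by
  have h1 : HasDerivAt (fun y : ℝ => 2*y + c) 2 u := by
    simpa using ((hasDerivAt_id u).const_mul 2).add_const c
  exact (Real.hasDerivAt_sin (2*u+c)).comp u h1

lemma cossqRep (m : ℕ) : iteratedDeriv (m+1) (fun u : ℝ => Real.cos u ^ 2)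
    = fun u => 2^m * Real.cos (2*u + (m+1)*(π/2)) := by
  induction m with
  | zero =>
    rw [iteratedDeriv_one]
    funext u
    have h : HasDerivAt (fun u : ℝ => Real.cos u ^ 2)
        ((2:ℕ) * Real.cos u ^ 1 * (-Real.sin u)) u := (Real.hasDerivAt_cos u).pow 2
    rw [h.deriv, show (((0:ℕ):ℝ)+1)*(π/2) = 0 + π/2 by norm_num, ← add_assoc,
      Real.cos_add_pi_div_two, add_zero, Real.sin_two_mul]
    push_cast; ring
  | succ m ih =>
    rw [iteratedDeriv_succ, ih]
    funext u
    have h : HasDerivAt (fun y : ℝ => 2^m * Real.cos (2*y + (m+1)*(π/2)))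
        (2^m * (-Real.sin (2*u + (m+1)*(π/2)) * 2)) u := (hd_cos_affine _ u).const_mul _
    rw [h.deriv, show (((m+1:ℕ):ℝ)+1)*(π/2) = ((m:ℝ)+1)*(π/2) + π/2 by push_cast; ring,
      ← add_assoc, Real.cos_add_pi_div_two]
    ring

lemma sincosRep (m : ℕ) : iteratedDeriv (m+1) (fun u : ℝ => Real.sin u * Real.cos u)
    = fun u => 2^m * Real.sin (2*u + (m+1)*(π/2)) := by
  induction m with
  | zero =>
    rw [iteratedDeriv_one]
    funext u
    have h : HasDerivAt (fun u : ℝ => Real.sin u * Real.cos u)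
        (Real.cos u * Real.cos u + Real.sin u * (-Real.sin u)) u :=
      (Real.hasDerivAt_sin u).mul (Real.hasDerivAt_cos u)
    rw [h.deriv, show (((0:ℕ):ℝ)+1)*(π/2) = 0 + π/2 by norm_num, ← add_assoc,
      Real.sin_add_pi_div_two, add_zero, Real.cos_two_mul']
    push_cast; ring
  | succ m ih =>
    rw [iteratedDeriv_succ, ih]
    funext u
    have h : HasDerivAt (fun y : ℝ => 2^m * Real.sin (2*y + (m+1)*(π/2)))
        (2^m * (Real.cos (2*u + (m+1)*(π/2)) * 2)) u := (hd_sin_affine _ u).const_mul _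
    rw [h.deriv, show (((m+1:ℕ):ℝ)+1)*(π/2) = ((m:ℝ)+1)*(π/2) + π/2 by push_cast; ring,
      ← add_assoc, Real.sin_add_pi_div_two]
    ring


lemma pascal_sum (n : ℕ) (a b : ℕ → ℝ) :
    ∑ p ∈ antidiagonal n, (n.choose p.1 : ℝ) * (a (p.1+1) * b p.2 + a p.1 * b (p.2+1))
    = ∑ p ∈ antidiagonal (n+1), ((n+1).choose p.1 : ℝ) * (a p.1 * b p.2) := by
  rw [Finset.Nat.sum_antidiagonal_succ
    (f := fun p => ((n+1).choose p.1 : ℝ) * (a p.1 * b p.2))]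
  have e1 : ∀ p ∈ antidiagonal n,
      (((n+1).choose (p.1+1) : ℝ)) * (a (p.1+1) * b p.2)
      = (n.choose p.1 : ℝ) * (a (p.1+1) * b p.2) + (n.choose (p.1+1) : ℝ) * (a (p.1+1) * b p.2) := by
    intro p _
    rw [Nat.choose_succ_succ n p.1]
    push_cast; ring
  rw [Finset.sum_congr rfl e1, Finset.sum_add_distrib]
  have h1 := Finset.Nat.sum_antidiagonal_succ
    (f := fun p => (n.choose p.1 : ℝ) * (a p.1 * b p.2)) (n := n)
  have h2 := Finset.Nat.sum_antidiagonal_succ'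
    (f := fun p => (n.choose p.1 : ℝ) * (a p.1 * b p.2)) (n := n)
  simp only [Nat.choose_zero_right, Nat.choose_succ_self, Nat.cast_zero, Nat.cast_one,
    zero_mul, add_zero, one_mul, zero_add] at h1 h2
  have e2 : ∑ p ∈ antidiagonal n, (n.choose (p.1+1) : ℝ) * (a (p.1+1) * b p.2)
      = ∑ p ∈ antidiagonal n, (n.choose p.1 : ℝ) * (a p.1 * b (p.2+1)) - a 0 * b (n+1) := by
    rw [← h2, h1]; ring
  rw [e2]
  simp only [mul_add, Finset.sum_add_distrib, Nat.choose_zero_right, Nat.cast_one]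
  ring

noncomputable def Qp : ℕ → Polynomial ℝ
  | 0 => Polynomial.X
  | (m+1) => (Qp m).derivative * (1 + Polynomial.X ^ 2)

lemma tanRep (m : ℕ) : ∀ x ∈ Ioo (-(π/2)) (π/2), iteratedDeriv m Real.tan x = (Qp m).eval (Real.tan x) := by
  induction m with
  | zero => intro x hx; simp [Qp]
  | succ m ih =>
    intro x hx
    have hopen : IsOpen (Ioo (-(π/2)) (π/2) : Set ℝ) := isOpen_Ioo
    have hev : iteratedDeriv m Real.tan =ᶠ[nhds x] fun y => (Qp m).eval (Real.tan y) :=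
      Filter.eventuallyEq_of_mem (hopen.mem_nhds hx) ih
    have hcos : Real.cos x ≠ 0 := (Real.cos_pos_of_mem_Ioo hx).ne'
    have htan : HasDerivAt Real.tan (1 / Real.cos x ^ 2) x := Real.hasDerivAt_tan hcos
    have hcomp : HasDerivAt (fun y => (Qp m).eval (Real.tan y))
        ((Qp m).derivative.eval (Real.tan x) * (1 / Real.cos x ^ 2)) x :=
      (Polynomial.hasDerivAt (Qp m) (Real.tan x)).comp x htan
    rw [iteratedDeriv_succ, hev.deriv_eq, hcomp.deriv]
    have h1 : (1 : ℝ) / Real.cos x ^ 2 = 1 + Real.tan x ^ 2 := by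
      rw [← Real.inv_one_add_tan_sq hcos]; field_simp
    simp [Qp, h1]

lemma tanIter (i : ℕ) {x : ℝ} (hx : x ∈ Ioo (-(π/2)) (π/2)) :
    HasDerivAt (iteratedDeriv i Real.tan) (iteratedDeriv (i+1) Real.tan x) x := by
  have hopen : IsOpen (Ioo (-(π/2)) (π/2) : Set ℝ) := isOpen_Ioo
  have hev : iteratedDeriv i Real.tan =ᶠ[nhds x] fun y => (Qp i).eval (Real.tan y) :=
    Filter.eventuallyEq_of_mem (hopen.mem_nhds hx) (tanRep i)
  have hcos : Real.cos x ≠ 0 := (Real.cos_pos_of_mem_Ioo hx).ne'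
  have hcomp : HasDerivAt (fun y => (Qp i).eval (Real.tan y))
      ((Qp i).derivative.eval (Real.tan x) * (1 / Real.cos x ^ 2)) x :=
    (Polynomial.hasDerivAt (Qp i) (Real.tan x)).comp x (Real.hasDerivAt_tan hcos)
  have : HasDerivAt (iteratedDeriv i Real.tan)
      ((Qp i).derivative.eval (Real.tan x) * (1 / Real.cos x ^ 2)) x :=
    hcomp.congr_of_eventuallyEq hev
  convert this using 1
  rw [tanRep (i+1) x hx]
  have h1 : (1 : ℝ) / Real.cos x ^ 2 = 1 + Real.tan x ^ 2 := by
    rw [← Real.inv_one_add_tan_sq hcos]; field_simp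
  simp [Qp, h1]

lemma cq_contDiff : ContDiff ℝ ⊤ (fun u : ℝ => Real.cos u ^ 2) :=
  Real.contDiff_cos.pow 2

lemma cqIter (i : ℕ) (x : ℝ) :
    HasDerivAt (iteratedDeriv i (fun u : ℝ => Real.cos u ^ 2))
      (iteratedDeriv (i+1) (fun u : ℝ => Real.cos u ^ 2) x) x := by
  have hd : Differentiable ℝ (iteratedDeriv i (fun u : ℝ => Real.cos u ^ 2)) :=
    cq_contDiff.differentiable_iteratedDeriv i (by exact_mod_cast lt_top_iff_ne_top.mpr (by simp))
  have := (hd x).hasDerivAt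
  rwa [← iteratedDeriv_succ] at this

lemma leibniz (n : ℕ) : ∀ x ∈ Ioo (-(π/2)) (π/2),
    iteratedDeriv n (fun u : ℝ => Real.sin u * Real.cos u) x
    = ∑ p ∈ antidiagonal n, (n.choose p.1 : ℝ) *
        (iteratedDeriv p.1 Real.tan x * iteratedDeriv p.2 (fun u : ℝ => Real.cos u ^ 2) x) := by
  induction n with
  | zero =>
    intro x hx
    have hcos : Real.cos x ≠ 0 := (Real.cos_pos_of_mem_Ioo hx).ne'
    simp [Real.tan_eq_sin_div_cos]
    field_simp
  | succ n ih =>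
    intro x hx
    have hopen : IsOpen (Ioo (-(π/2)) (π/2) : Set ℝ) := isOpen_Ioo
    have hev : iteratedDeriv n (fun u : ℝ => Real.sin u * Real.cos u) =ᶠ[nhds x]
        fun y => ∑ p ∈ antidiagonal n, (n.choose p.1 : ℝ) *
          (iteratedDeriv p.1 Real.tan y * iteratedDeriv p.2 (fun u : ℝ => Real.cos u ^ 2) y) :=
      Filter.eventuallyEq_of_mem (hopen.mem_nhds hx) ih
    have hG : HasDerivAt (fun y => ∑ p ∈ antidiagonal n, (n.choose p.1 : ℝ) *
          (iteratedDeriv p.1 Real.tan y * iteratedDeriv p.2 (fun u : ℝ => Real.cos u ^ 2) y))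
        (∑ p ∈ antidiagonal n, (n.choose p.1 : ℝ) *
          (iteratedDeriv (p.1+1) Real.tan x * iteratedDeriv p.2 (fun u : ℝ => Real.cos u ^ 2) x
           + iteratedDeriv p.1 Real.tan x * iteratedDeriv (p.2+1) (fun u : ℝ => Real.cos u ^ 2) x)) x := by
      apply HasDerivAt.fun_sum
      intro p _
      exact ((tanIter p.1 hx).mul (cqIter p.2 x)).const_mul _
    rw [iteratedDeriv_succ, hev.deriv_eq, hG.deriv]
    exact pascal_sum n (fun i => iteratedDeriv i Real.tan x)
      (fun j => iteratedDeriv j (fun u : ℝ => Real.cos u ^ 2) x)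

lemma g_zero : iteratedDeriv 0 (fun u : ℝ => Real.cos u ^ 2) 0 = 1 := by simp

lemma g_odd (r : ℕ) : iteratedDeriv (2*r+1) (fun u : ℝ => Real.cos u ^ 2) 0 = 0 := by
  rw [cossqRep (2*r)]
  simp only [mul_zero, zero_add]
  rw [show ((2*r:ℕ):ℝ) + 1 = ((2*r+1:ℕ):ℝ) by push_cast; ring, cos_odd_half]
  ring

lemma g_even (r : ℕ) : iteratedDeriv (2*r+2) (fun u : ℝ => Real.cos u ^ 2) 0
    = 2^(2*r+1) * (-1:ℝ)^(r+1) := by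
  rw [show 2*r+2 = (2*r+1)+1 by ring, cossqRep (2*r+1)]
  simp only [mul_zero, zero_add]
  rw [show ((2*r+1:ℕ):ℝ) + 1 = ((2*(r+1):ℕ):ℝ) by push_cast; ring, cos_even_half]

lemma sincos_val (n : ℕ) : iteratedDeriv (2*n+1) (fun u : ℝ => Real.sin u * Real.cos u) 0
    = 2^(2*n) * (-1:ℝ)^n := by
  rw [show 2*n+1 = (2*n)+1 by ring, sincosRep (2*n)]
  simp only [mul_zero, zero_add]
  rw [show ((2*n:ℕ):ℝ) + 1 = ((2*n+1:ℕ):ℝ) by push_cast; ring, sin_odd_half]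

lemma starId (n : ℕ) : tangentNumber (2*n+1)
    = (∑ i ∈ range n, (-1:ℝ)^i * 2^(2*i+1) * ((2*n+1).choose (2*i+2) : ℝ)
        * tangentNumber (2*(n-i)-1)) + (-4:ℝ)^n := by
  have h0 : (0:ℝ) ∈ Ioo (-(π/2)) (π/2) := by
    constructor <;> [linarith [Real.pi_div_two_pos]; exact Real.pi_div_two_pos]
  have E := leibniz (2*n+1) 0 h0
  rw [sincos_val n] at E
  rw [Finset.Nat.sum_antidiagonal_eq_sum_range_succ_mk] at E
  rw [show (2*n+1).succ = 2*(n+1) by omega, sum_range_even_odd] at E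
  have heven : ∀ m ∈ range (n+1), ((2*n+1).choose (2*m) : ℝ) *
      (iteratedDeriv (2*m) Real.tan 0 * iteratedDeriv (2*n+1-2*m) (fun u : ℝ => Real.cos u ^ 2) 0)
      = 0 := by
    intro m hm
    have hm' : m < n+1 := Finset.mem_range.mp hm
    rw [show 2*n+1-2*m = 2*(n-m)+1 by omega, g_odd]
    ring
  rw [Finset.sum_congr rfl heven, Finset.sum_const_zero, zero_add] at E
  rw [Finset.sum_range_succ] at E
  rw [show 2*n+1-(2*n+1) = 0 by omega, g_zero, Nat.choose_self] at E
  have hodd : ∀ m ∈ range n, ((2*n+1).choose (2*m+1) : ℝ) *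
      (iteratedDeriv (2*m+1) Real.tan 0 * iteratedDeriv (2*n+1-(2*m+1)) (fun u : ℝ => Real.cos u ^ 2) 0)
      = ((2*n+1).choose (2*m+1) : ℝ) * tangentNumber (2*m+1) * (2^(2*(n-m-1)+1) * (-1:ℝ)^(n-m)) := by
    intro m hm
    have hm' : m < n := Finset.mem_range.mp hm
    rw [show 2*n+1-(2*m+1) = 2*(n-m-1)+2 by omega, g_even]
    rw [show n-m-1+1 = n-m by omega]
    unfold tangentNumber
    ring
  rw [Finset.sum_congr rfl hodd] at E
  -- E : Σ_{m∈range n} C(2n+1,2m+1) T(2m+1) 2^{2(n-m-1)+1} (-1)^{n-m} + C(2n+1,2n+1)... 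
  have E' : tangentNumber (2*n+1)
      = 2^(2*n) * (-1:ℝ)^n
        - ∑ m ∈ range n, ((2*n+1).choose (2*m+1) : ℝ) * tangentNumber (2*m+1)
            * (2^(2*(n-m-1)+1) * (-1:ℝ)^(n-m)) := by
    simp only [Nat.cast_one, one_mul] at E
    unfold tangentNumber at E ⊢
    linarith [E]
  rw [E']
  rw [← Finset.sum_range_reflect (fun i => (-1:ℝ)^i * 2^(2*i+1) * ((2*n+1).choose (2*i+2) : ℝ)
      * tangentNumber (2*(n-i)-1)) n]
  have hterm : ∀ m ∈ range n,
      (-1:ℝ)^(n-1-m) * 2^(2*(n-1-m)+1) * ((2*n+1).choose (2*(n-1-m)+2) : ℝ)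
        * tangentNumber (2*(n-(n-1-m))-1)
      = -(((2*n+1).choose (2*m+1) : ℝ) * tangentNumber (2*m+1)
          * (2^(2*(n-m-1)+1) * (-1:ℝ)^(n-m))) := by
    intro m hm
    have hm' : m < n := Finset.mem_range.mp hm
    rw [show 2*(n-(n-1-m))-1 = 2*m+1 by omega]
    rw [show 2*(n-1-m)+2 = (2*n+1) - (2*m+1) by omega,
      Nat.choose_symm (by omega)]
    rw [show n-m-1 = n-1-m by omega]
    rw [show n-m = (n-1-m)+1 by omega]
    ring
  rw [Finset.sum_congr rfl hterm, Finset.sum_neg_distrib]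
  have : ((-4:ℝ))^n = 2^(2*n) * (-1:ℝ)^n := by
    rw [show (-4:ℝ) = (2^2) * (-1) by norm_num, mul_pow, ← pow_mul]
  rw [this]
  ring

noncomputable def Phi (n k : ℕ) : ℝ :=
  (∑ i ∈ range n, (-1:ℝ)^i * 2^(2*i+1) * tangentNumber (2*(n-i)-1) * ((k-1).choose (2*i+1) : ℝ))
    + (-4:ℝ)^n * ((k-1).choose (2*n) : ℝ)

lemma phi_zero_one : Phi 0 1 = 1 := by simp [Phi]

lemma phi_one (n : ℕ) : Phi (n+1) 1 = 0 := by
  unfold Phi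
  rw [Finset.sum_eq_zero, Nat.choose_eq_zero_of_lt (by omega)]
  · simp
  · intro i _
    rw [show (1:ℕ)-1 = 0 from rfl, Nat.choose_eq_zero_of_lt (by omega)]
    simp

lemma phi_two (n : ℕ) : Phi (n+1) 2 = 2 * tangentNumber (2*n+1) := by
  unfold Phi
  rw [show (2:ℕ)-1 = 1 from rfl,
    Nat.choose_eq_zero_of_lt (show 1 < 2*(n+1) by omega),
    Finset.sum_range_succ' (fun i => (-1:ℝ)^i * 2^(2*i+1) * tangentNumber (2*(n+1-i)-1)
      * ((1:ℕ).choose (2*i+1) : ℝ)) n,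
    Finset.sum_eq_zero (fun i _ => by
      rw [Nat.choose_eq_zero_of_lt (show 1 < 2*(i+1)+1 by omega)]; simp)]
  simp [show 2*(n+1)-1 = 2*n+1 by omega]

lemma secdiff_nat (k m : ℕ) : (k+2).choose (m+2) + k.choose (m+2)
    = 2 * ((k+1).choose (m+2)) + k.choose m := by
  rw [show k+2 = (k+1)+1 from rfl, Nat.choose_succ_succ (k+1) (m+1),
    Nat.choose_succ_succ k (m+1), Nat.choose_succ_succ k m]
  ring

lemma secdiff (k m : ℕ) (hk : 1 ≤ k) :
    ((k+1).choose (m+2) : ℝ) - 2*(k.choose (m+2) : ℝ) + ((k-1).choose (m+2) : ℝ)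
    = ((k-1).choose m : ℝ) := by
  obtain ⟨k', rfl⟩ : ∃ k', k = k'+1 := ⟨k-1, by omega⟩
  have := secdiff_nat k' m
  rw [show k'+1+1 = k'+2 from rfl, show k'+1-1 = k' from rfl]
  have := congrArg (Nat.cast (R := ℝ)) this
  push_cast at this ⊢
  linarith

lemma phi_diff (n k : ℕ) (hk : 1 ≤ k) :
    Phi (n+1) (k+2) = 2*Phi (n+1) (k+1) - Phi (n+1) k - 4 * Phi n k := by
  obtain ⟨k', rfl⟩ : ∃ k', k = k'+1 := ⟨k-1, by omega⟩
  unfold Phi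
  rw [show k'+1+2-1 = k'+2 by omega, show k'+1+1-1 = k'+1 by omega, show k'+1-1 = k' by omega]
  have hsec : ∀ m : ℕ, ((k'+2).choose (m+2) : ℝ) - 2*(((k'+1).choose (m+2)):ℝ)
      + ((k'.choose (m+2)):ℝ) = (k'.choose m : ℝ) := by
    intro m
    have := secdiff (k'+1) m (by omega)
    simpa using this
  have hmain :
      (∑ i ∈ range (n+1), (-1:ℝ)^i * 2^(2*i+1) * tangentNumber (2*(n+1-i)-1) * ((k'+2).choose (2*i+1) : ℝ))
      - 2*(∑ i ∈ range (n+1), (-1:ℝ)^i * 2^(2*i+1) * tangentNumber (2*(n+1-i)-1) * ((k'+1).choose (2*i+1) : ℝ))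
      + (∑ i ∈ range (n+1), (-1:ℝ)^i * 2^(2*i+1) * tangentNumber (2*(n+1-i)-1) * ((k').choose (2*i+1) : ℝ))
      = -4 * ∑ i ∈ range n, (-1:ℝ)^i * 2^(2*i+1) * tangentNumber (2*(n-i)-1) * ((k').choose (2*i+1) : ℝ) := by
    rw [Finset.mul_sum, ← Finset.sum_sub_distrib, ← Finset.sum_add_distrib]
    have e : ∀ i ∈ range (n+1),
        (-1:ℝ)^i * 2^(2*i+1) * tangentNumber (2*(n+1-i)-1) * ((k'+2).choose (2*i+1) : ℝ)
        - 2*((-1:ℝ)^i * 2^(2*i+1) * tangentNumber (2*(n+1-i)-1) * ((k'+1).choose (2*i+1) : ℝ))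
        + (-1:ℝ)^i * 2^(2*i+1) * tangentNumber (2*(n+1-i)-1) * ((k').choose (2*i+1) : ℝ)
        = (-1:ℝ)^i * 2^(2*i+1) * tangentNumber (2*(n+1-i)-1)
          * (((k'+2).choose (2*i+1):ℝ) - 2*(((k'+1).choose (2*i+1)):ℝ) + ((k'.choose (2*i+1)):ℝ)) := by
      intro i _; ring
    rw [Finset.sum_congr rfl e,
      Finset.sum_range_succ' (fun i => (-1:ℝ)^i * 2^(2*i+1) * tangentNumber (2*(n+1-i)-1)
        * (((k'+2).choose (2*i+1):ℝ) - 2*(((k'+1).choose (2*i+1)):ℝ) + ((k'.choose (2*i+1)):ℝ))) n]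
    have e0 : ((k'+2).choose 1 : ℝ) - 2*(((k'+1).choose 1):ℝ) + ((k'.choose 1):ℝ) = 0 := by
      simp only [Nat.choose_one_right]
      push_cast; ring
    simp only [pow_zero, mul_zero, Nat.mul_zero, zero_add, e0, add_zero, one_mul, mul_one]
    rw [Finset.mul_sum]
    apply Finset.sum_congr rfl
    intro i _
    rw [show 2*(i+1)+1 = (2*i+1)+2 by ring, hsec (2*i+1)]
    rw [show n+1-(i+1) = n-i by omega]
    ring
  have hcorr : ((-4:ℝ))^(n+1) * (((k'+2).choose (2*(n+1))):ℝ)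
      - 2*(((-4:ℝ))^(n+1) * (((k'+1).choose (2*(n+1))):ℝ))
      + ((-4:ℝ))^(n+1) * (((k'.choose (2*(n+1)))):ℝ)
      = -4 * ((-4:ℝ)^n * ((k'.choose (2*n)):ℝ)) := by
    rw [show 2*(n+1) = (2*n)+2 by ring]
    have := hsec (2*n)
    rw [pow_succ]
    linear_combination ((-4:ℝ)^n * (-4)) * this
  linarith [hmain, hcorr]

lemma sum_range_choose_eq (N m : ℕ) : ∑ j ∈ range N, j.choose m = N.choose (m+1) := by
  induction N with
  | zero => simp
  | succ N ih => rw [Finset.sum_range_succ, ih, Nat.choose_succ_succ N m]; ring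

lemma sum_Icc_choose_shift (N m : ℕ) :
    ∑ k ∈ Icc 1 N, (((k-1).choose m : ℕ) : ℝ) = (N.choose (m+1) : ℝ) := by
  induction N with
  | zero => simp
  | succ N ih =>
    rw [Finset.sum_Icc_succ_top (by omega), ih, show N+1-1 = N from rfl,
      Nat.choose_succ_succ N m]
    push_cast; ring

lemma phi_rowsum (n : ℕ) : ∑ k ∈ Icc 1 (2*n+1), Phi n k = tangentNumber (2*n+1) := by
  unfold Phi
  rw [Finset.sum_add_distrib, Finset.sum_comm]
  have e1 : ∀ i ∈ range n,
      ∑ k ∈ Icc 1 (2*n+1), (-1:ℝ)^i * 2^(2*i+1) * tangentNumber (2*(n-i)-1) * ((k-1).choose (2*i+1) : ℝ)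
      = (-1:ℝ)^i * 2^(2*i+1) * tangentNumber (2*(n-i)-1) * ((2*n+1).choose (2*i+2) : ℝ) := by
    intro i _
    rw [← Finset.mul_sum, sum_Icc_choose_shift]
  have e2 : ∑ k ∈ Icc 1 (2*n+1), (-4:ℝ)^n * ((k-1).choose (2*n) : ℝ)
      = (-4:ℝ)^n := by
    rw [← Finset.mul_sum, sum_Icc_choose_shift, show 2*n+1 = 2*n+1 from rfl, Nat.choose_self]
    simp
  rw [Finset.sum_congr rfl e1, e2, starId n]
  congr 1
  apply Finset.sum_congr rfl
  intro i _
  ring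


end Aux

/-- any solution of the finite difference system (1.2) with initial
conditions [tan1] has row sums equal to the tangent numbers. -/
theorem stmt0 (f : ℕ → ℕ → ℚ) (hFD : SatisfiesFD f) (hInit : Tan1 f) :
    ∀ n, 1 ≤ n →
      ((∑ k ∈ Finset.Icc 1 (2 * n - 1), f n k : ℚ) : ℝ) = tangentNumber (2 * n - 1) := by
  have key : ∀ n, ∀ k, 1 ≤ k → k ≤ 2*n+1 → ((f (n+1) k : ℚ) : ℝ) = Phi n k := by
    intro n
    induction n using Nat.strong_induction_on with
    | _ n IH =>
      have hrow : ∀ m, m < n → ((∑ k ∈ Finset.Icc 1 (2*m+1), f (m+1) k : ℚ) : ℝ)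
          = tangentNumber (2*m+1) := by
        intro m hm
        rw [← phi_rowsum m]
        push_cast
        apply Finset.sum_congr rfl
        intro k hk
        rw [Finset.mem_Icc] at hk
        exact IH m hm k hk.1 hk.2
      intro k
      induction k using Nat.strong_induction_on with
      | _ k IHk =>
        intro hk1 hk2
        match k, hk1, hk2 with
        | 1, _, _ =>
          cases n with
          | zero =>
            rw [hInit.1, phi_zero_one]; norm_num
          | succ m =>
            have h := (hInit.2 (m+2) (by omega)).1
            rw [show m+1+1 = m+2 from rfl, h, phi_one]; norm_num
        | 2, _, hk2 =>
          have hn : 1 ≤ n := by omega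
          obtain ⟨m, rfl⟩ : ∃ m, n = m+1 := ⟨n-1, by omega⟩
          have h := (hInit.2 (m+2) (by omega)).2
          rw [show 2*(m+2)-3 = 2*m+1 by omega, show m+2-1 = m+1 from rfl] at h
          rw [show m+1+1 = m+2 from rfl, h, phi_two]
          push_cast
          rw [← hrow m (by omega)]
          push_cast
          ring
        | (j+3), _, hk2 =>
          obtain ⟨m, rfl⟩ : ∃ m, n = m+1 := ⟨n-1, by omega⟩
          have hFDj := hFD (m+2) (by omega) (j+1) (by omega) (show j+1 ≤ 2*(m+2)-3 by omega)
          have hcast := congrArg (fun q : ℚ => (q : ℝ)) hFDj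
          push_cast at hcast
          have e1 := IHk (j+2) (by omega) (by omega) (by omega)
          have e2 := IHk (j+1) (by omega) (by omega) (by omega)
          have e3 := IH m (by omega) (j+1) (by omega) (by omega)
          have hphi := phi_diff m (j+1) (by omega)
          rw [show j+1+2 = j+3 from rfl] at hphi
          rw [show j+1+2 = j+3 from rfl] at hcast
          rw [hphi, ← e1, ← e2, ← e3]
          linarith [hcast]
  intro n hn
  obtain ⟨N, rfl⟩ : ∃ N, n = N+1 := ⟨n-1, by omega⟩
  rw [show 2*(N+1)-1 = 2*N+1 by omega, ← phi_rowsum N]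
  push_cast
  apply Finset.sum_congr rfl
  intro k hk
  rw [Finset.mem_Icc] at hk
  exact key N k hk.1 hk.2
end

section
/- Let f = (f_n(k)) (n ≥ 1, 1 ≤ k ≤ 2n−1) be a family of rational numbers satisfying the finite difference system (1.2) together with the initial conditions [sec1]. Then for every n ≥ 1, the row sum equals the secant number: Σ_{k=1}^{2n−1} f_n(k) = E_{2n}. -/
open scoped BigOperators

/-- binomial coefficient block `β(n,m,p)` -/
def bet (n m p : ℕ) : ℕ :=
  2 * Nat.choose (2*n - 2*m + 1) (p + (2*n - 2*m) + 2)
    + Nat.choose (2*n - 2*m + 1) (p + (2*n - 2*m) + 1)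
    + 2 * Nat.choose (2*n) (p + (2*n - 2*m) + 2)
    + Nat.choose (2*n) (p + (2*n - 2*m) + 1)

/-- The secant numbers as rationals, via the recurrence extracted from the
finite difference system. -/
def Sq : ℕ → ℚ
  | 0 => 1
  | (n+1) =>
      (-4:ℚ)^n * ((Nat.choose (2*(n+1) - 1) (2*(n+1) - 2) : ℕ) : ℚ)
      + ∑ m ∈ (Finset.Icc 2 (n+1)).attach,
          (-4:ℚ)^(n+1 - (m:ℕ)) * Sq ((m:ℕ) - 1) * ((bet (n+1) (m:ℕ) 0 : ℕ) : ℚ)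
  decreasing_by
    have := m.2
    simp only [Finset.mem_Icc] at this
    omega

/-- predicted moment table -/
def Atab (n p : ℕ) : ℚ :=
  (-4:ℚ)^(n-1) * ((Nat.choose (2*n - 1) (p + (2*n - 2)) : ℕ) : ℚ)
  + ∑ m ∈ Finset.Icc 2 n, (-4:ℚ)^(n - m) * Sq (m - 1) * ((bet n m p : ℕ) : ℚ)

lemma Sq_eq_Atab (n : ℕ) (hn : 1 ≤ n) : Sq n = Atab n 0 := by
  obtain ⟨k, rfl⟩ : ∃ k, n = k + 1 := ⟨n - 1, by omega⟩
  rw [Sq, Atab, Finset.sum_attach (Finset.Icc 2 (k+1))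
    (fun m => (-4:ℚ)^(k+1 - m) * Sq (m - 1) * ((bet (k+1) m 0 : ℕ) : ℚ))]
  norm_num

lemma chooseDD (k p : ℕ) :
    Nat.choose (k+2) (p+2) = Nat.choose k (p+2) + 2 * Nat.choose k (p+1) + Nat.choose k p := by
  simp [Nat.choose_succ_succ]; ring


/-- two sequences satisfying the same 2nd order recursion with identical first
two values agree. -/
lemma rec2 (a b c : ℕ → ℚ) (K : ℕ)
    (ha : ∀ k, 1 ≤ k → k ≤ K → a (k+2) = 2 * a (k+1) - a k + c k)
    (hb : ∀ k, 1 ≤ k → k ≤ K → b (k+2) = 2 * b (k+1) - b k + c k)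
    (h1 : a 1 = b 1) (h2 : a 2 = b 2) :
    ∀ k, 1 ≤ k → k ≤ K + 2 → a k = b k := by
  intro k
  induction k using Nat.strong_induction_on with
  | _ k IH =>
    intro hk1 hk2
    match k, hk1 with
    | 1, _ => exact h1
    | 2, _ => exact h2
    | (j+3), _ =>
      have hj : 1 ≤ j + 1 ∧ j + 1 ≤ K := by omega
      rw [ha (j+1) hj.1 hj.2, hb (j+1) hj.1 hj.2,
        IH (j+2) (by omega) (by omega) (by omega),
        IH (j+1) (by omega) (by omega) (by omega)]

section Fside

variable {f : ℕ → ℕ → ℚ}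

/-- closed form of a row in terms of the previous row -/
lemma closed_form (hFD : SatisfiesFD f) (hInit : Sec1 f) {n : ℕ} (hn : 2 ≤ n) :
    ∀ k, 1 ≤ k → k ≤ 2*n - 1 →
      f n k = ((2*k - 1 : ℕ) : ℚ) * (∑ j ∈ Finset.Icc 1 (2*n - 3), f (n-1) j)
        - 4 * ∑ j ∈ Finset.Icc 1 (k - 2), ((k - 1 - j : ℕ) : ℚ) * f (n-1) j := by
  set S' := ∑ j ∈ Finset.Icc 1 (2*n - 3), f (n-1) j with hS'
  set g : ℕ → ℚ := fun k =>
    ((2*k - 1 : ℕ) : ℚ) * S' - 4 * ∑ j ∈ Finset.Icc 1 (k - 2), ((k - 1 - j : ℕ) : ℚ) * f (n-1) j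
    with hg
  have key : ∀ k, 1 ≤ k → k ≤ 2*n - 3 → g (k+2) = 2 * g (k+1) - g k + (-4) * f (n-1) k := by
    intro k hk1 hk2
    simp only [hg]
    have e1 : (k+2) - 2 = k := by omega
    have e2 : (k+1) - 2 = k - 1 := by omega
    rw [e1, e2]
    simp only [Nat.add_sub_cancel]
    -- extend the two smaller sums to `Icc 1 k` (added terms are zero)
    have ext1 : ∑ j ∈ Finset.Icc 1 (k-1), ((k - j : ℕ) : ℚ) * f (n-1) j
        = ∑ j ∈ Finset.Icc 1 k, ((k - j : ℕ) : ℚ) * f (n-1) j := by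
      apply Finset.sum_subset
      · intro j hj; simp only [Finset.mem_Icc] at *; omega
      · intro j hj hj'
        simp only [Finset.mem_Icc] at hj hj'
        have : j = k := by omega
        subst this
        simp
    have ext2 : ∑ j ∈ Finset.Icc 1 (k-2), ((k - 1 - j : ℕ) : ℚ) * f (n-1) j
        = ∑ j ∈ Finset.Icc 1 k, ((k - 1 - j : ℕ) : ℚ) * f (n-1) j := by
      apply Finset.sum_subset
      · intro j hj; simp only [Finset.mem_Icc] at *; omega
      · intro j hj hj'
        simp only [Finset.mem_Icc] at hj hj'
        have : k - 1 - j = 0 := by omega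
        rw [this]; simp
    rw [ext1, ext2]
    have split : ∑ j ∈ Finset.Icc 1 k, ((k + 2 - 1 - j : ℕ) : ℚ) * f (n-1) j
        = ∑ j ∈ Finset.Icc 1 k,
            ((2 * ((k - j : ℕ) : ℚ) - ((k - 1 - j : ℕ) : ℚ)) + (if j = k then 1 else 0)) * f (n-1) j := by
      apply Finset.sum_congr rfl
      intro j hj
      simp only [Finset.mem_Icc] at hj
      congr 1
      rcases eq_or_lt_of_le hj.2 with h | h
      · subst h
        simp
      · have c1 : (k + 2 - 1 - j : ℕ) = (k - j) + 1 := by omega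
        have c2 : (k - 1 - j : ℕ) = (k - j) - 1 := by omega
        have c3 : 1 ≤ k - j := by omega
        simp only [if_neg (by omega : ¬ j = k), c1, c2]
        push_cast [Nat.cast_sub c3]
        ring
    have hcast : ((2*(k+2) - 1 : ℕ) : ℚ) = 2 * ((2*(k+1) - 1 : ℕ) : ℚ) - ((2*k - 1 : ℕ) : ℚ) := by
      push_cast [Nat.cast_sub (by omega : 1 ≤ 2*(k+2)), Nat.cast_sub (by omega : 1 ≤ 2*(k+1)),
        Nat.cast_sub (by omega : 1 ≤ 2*k)]
      ring
    rw [split, hcast]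
    simp only [add_mul, ite_mul, one_mul, zero_mul, Finset.sum_add_distrib, sub_mul,
      Finset.sum_sub_distrib, Finset.sum_ite_eq' (Finset.Icc 1 k)]
    simp only [Finset.mem_Icc, and_true, hk1, le_refl, true_and, if_true, mul_assoc]
    rw [← Finset.mul_sum]
    ring
  have hfa : ∀ k, 1 ≤ k → k ≤ 2*n - 3 → f n (k+2) = 2 * f n (k+1) - f n k + (-4) * f (n-1) k := by
    intro k hk1 hk2
    have := hFD n hn k hk1 hk2
    linarith
  have h1 : f n 1 = g 1 := by
    simp only [hg]
    have : (1:ℕ) - 2 = 0 := by omega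
    rw [this]
    simp [(hInit.2 n hn).1, hS']
  have h2 : f n 2 = g 2 := by
    simp only [hg]
    have : (2:ℕ) - 2 = 0 := by omega
    rw [this]
    simp only [Finset.Icc_self, Finset.Icc_eq_empty_of_lt (by omega : (1:ℕ) > 0)]
    norm_num [(hInit.2 n hn).2, hS']
  intro k hk1 hk2
  have := rec2 (f n) g (fun k => (-4) * f (n-1) k) (2*n - 3) hfa key h1 h2 k hk1 (by omega)
  exact this

/-- first moment of a symmetric row -/
lemma moment_of_symm {n : ℕ} (hn : 1 ≤ n) (g : ℕ → ℚ)
    (hsym : ∀ k, 1 ≤ k → k ≤ 2*n - 1 → g (2*n - k) = g k) :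
    ∑ k ∈ Finset.Icc 1 (2*n - 1), (k : ℚ) * g k
      = (n : ℚ) * ∑ k ∈ Finset.Icc 1 (2*n - 1), g k := by
  have hrefl : ∑ k ∈ Finset.Icc 1 (2*n - 1), (k : ℚ) * g k
      = ∑ k ∈ Finset.Icc 1 (2*n - 1), ((2*n - k : ℕ) : ℚ) * g (2*n - k) := by
    apply Finset.sum_nbij' (fun k => 2*n - k) (fun k => 2*n - k)
    · intro a ha; simp only [Finset.mem_Icc] at *; omega
    · intro a ha; simp only [Finset.mem_Icc] at *; omega
    · intro a ha; simp only [Finset.mem_Icc] at ha; omega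
    · intro a ha; simp only [Finset.mem_Icc] at ha; omega
    · intro a ha
      simp only [Finset.mem_Icc] at ha
      have : 2*n - (2*n - a) = a := by omega
      rw [this]
  have refl2 : ∑ k ∈ Finset.Icc 1 (2*n - 1), ((2*n - k : ℕ) : ℚ) * g (2*n - k)
      = ∑ k ∈ Finset.Icc 1 (2*n - 1), (2*(n:ℚ) - (k:ℚ)) * g k := by
    apply Finset.sum_congr rfl
    intro k hk
    simp only [Finset.mem_Icc] at hk
    rw [hsym k hk.1 hk.2]
    congr 1
    push_cast [Nat.cast_sub (by omega : k ≤ 2*n)]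
    ring
  have : (2:ℚ) * ∑ k ∈ Finset.Icc 1 (2*n - 1), (k : ℚ) * g k
      = 2*(n:ℚ) * ∑ k ∈ Finset.Icc 1 (2*n - 1), g k := by
    calc (2:ℚ) * ∑ k ∈ Finset.Icc 1 (2*n - 1), (k : ℚ) * g k
        = ∑ k ∈ Finset.Icc 1 (2*n - 1), (k : ℚ) * g k
          + ∑ k ∈ Finset.Icc 1 (2*n - 1), (2*(n:ℚ) - (k:ℚ)) * g k := by
          rw [← refl2, ← hrefl]; ring
      _ = ∑ k ∈ Finset.Icc 1 (2*n - 1), (2*(n:ℚ)) * g k := by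
          rw [← Finset.sum_add_distrib]
          apply Finset.sum_congr rfl
          intro k hk; ring
      _ = 2*(n:ℚ) * ∑ k ∈ Finset.Icc 1 (2*n - 1), g k := by rw [Finset.mul_sum]
  linarith

/-- endpoints of a row, given symmetry of the previous row -/
lemma endpoints (hFD : SatisfiesFD f) (hInit : Sec1 f) {n : ℕ} (hn : 2 ≤ n)
    (hsymprev : ∀ k, 1 ≤ k → k ≤ 2*(n-1) - 1 → f (n-1) (2*(n-1) - k) = f (n-1) k) :
    f n (2*n - 1) = (∑ j ∈ Finset.Icc 1 (2*n - 3), f (n-1) j)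
      ∧ f n (2*n - 2) = 3 * (∑ j ∈ Finset.Icc 1 (2*n - 3), f (n-1) j) := by
  set S' := ∑ j ∈ Finset.Icc 1 (2*n - 3), f (n-1) j with hS'
  have hmom : ∑ k ∈ Finset.Icc 1 (2*(n-1) - 1), (k : ℚ) * f (n-1) k
      = ((n-1 : ℕ) : ℚ) * ∑ k ∈ Finset.Icc 1 (2*(n-1) - 1), f (n-1) k :=
    moment_of_symm (by omega) (f (n-1)) hsymprev
  have e23 : 2*(n-1) - 1 = 2*n - 3 := by omega
  rw [e23] at hmom
  have gen : ∀ t, 2*n - 2 ≤ t → t ≤ 2*n - 1 →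
      f n t = ((2*t - 1 : ℕ):ℚ) * S' - 4 * ((((t:ℚ) - 1) * S') - (((n:ℚ) - 1) * S')) := by
    intro t ht1 ht2
    rw [closed_form hFD hInit hn t (by omega) ht2]
    have hext : ∑ j ∈ Finset.Icc 1 (t - 2), ((t - 1 - j : ℕ) : ℚ) * f (n-1) j
        = ∑ j ∈ Finset.Icc 1 (2*n - 3), ((t - 1 - j : ℕ) : ℚ) * f (n-1) j := by
      apply Finset.sum_subset
      · intro j hj; simp only [Finset.mem_Icc] at *; omega
      · intro j hj hj'
        simp only [Finset.mem_Icc] at hj hj'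
        have : t - 1 - j = 0 := by omega
        rw [this]; simp
    rw [hext]
    have hw : ∑ j ∈ Finset.Icc 1 (2*n - 3), ((t - 1 - j : ℕ) : ℚ) * f (n-1) j
        = ∑ j ∈ Finset.Icc 1 (2*n - 3), (((t:ℚ) - 1) * f (n-1) j - (j:ℚ) * f (n-1) j) := by
      apply Finset.sum_congr rfl
      intro j hj
      simp only [Finset.mem_Icc] at hj
      have : ((t - 1 - j : ℕ) : ℚ) = (t:ℚ) - 1 - (j:ℚ) := by
        push_cast [Nat.cast_sub (by omega : j ≤ t - 1), Nat.cast_sub (by omega : 1 ≤ t)]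
        ring
      rw [this]; ring
    rw [hw, Finset.sum_sub_distrib, ← Finset.mul_sum, hmom, ← hS']
    have : ((n - 1 : ℕ) : ℚ) = (n:ℚ) - 1 := by
      push_cast [Nat.cast_sub (by omega : 1 ≤ n)]; ring
    rw [this]
  constructor
  · rw [gen (2*n-1) (by omega) (by omega)]
    have c1 : ((2*(2*n-1) - 1 : ℕ) : ℚ) = 4*(n:ℚ) - 3 := by
      push_cast [Nat.cast_sub (by omega : 1 ≤ 2*(2*n-1)), Nat.cast_sub (by omega : 1 ≤ 2*n)]
      ring
    have c2 : (((2*n-1 : ℕ)):ℚ) = 2*(n:ℚ) - 1 := by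
      push_cast [Nat.cast_sub (by omega : 1 ≤ 2*n)]; ring
    rw [c1, c2]; ring
  · rw [gen (2*n-2) (by omega) (by omega)]
    have c1 : ((2*(2*n-2) - 1 : ℕ) : ℚ) = 4*(n:ℚ) - 5 := by
      push_cast [Nat.cast_sub (by omega : 1 ≤ 2*(2*n-2)), Nat.cast_sub (by omega : 2 ≤ 2*n)]
      ring
    have c2 : (((2*n-2 : ℕ)):ℚ) = 2*(n:ℚ) - 2 := by
      push_cast [Nat.cast_sub (by omega : 2 ≤ 2*n)]; ring
    rw [c1, c2]; ring


lemma symm_all (hFD : SatisfiesFD f) (hInit : Sec1 f) :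
    ∀ n, 1 ≤ n → ∀ k, 1 ≤ k → k ≤ 2*n - 1 → f n (2*n - k) = f n k := by
  intro n
  induction n with
  | zero => omega
  | succ n IH =>
    intro _ k hk1 hk2
    rcases Nat.eq_zero_or_pos n with rfl | hn
    · -- n+1 = 1 : only k = 1
      have : k = 1 := by omega
      subst this
      norm_num
    · have hsymprev : ∀ k, 1 ≤ k → k ≤ 2*((n+1)-1) - 1 → f ((n+1)-1) (2*((n+1)-1) - k) = f ((n+1)-1) k := by
        have e : (n+1) - 1 = n := by omega
        rw [e]
        exact IH hn
      have hep := endpoints hFD hInit (by omega : 2 ≤ n+1) hsymprev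
      have hini := hInit.2 (n+1) (by omega)
      set S' := ∑ j ∈ Finset.Icc 1 (2*(n+1) - 3), f ((n+1)-1) j with hS'
      have ha : ∀ j, 1 ≤ j → j ≤ 2*(n+1) - 3 →
          (fun k => f (n+1) (2*(n+1) - k)) (j+2)
            = 2 * (fun k => f (n+1) (2*(n+1) - k)) (j+1) - (fun k => f (n+1) (2*(n+1) - k)) j
              + (-4) * f n j := by
        intro j hj1 hj2
        simp only
        have hFDj := hFD (n+1) (by omega) (2*(n+1) - j - 2) (by omega) (by omega)
        have e0 : (n+1) - 1 = n := by omega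
        have e1 : 2*(n+1) - j - 2 + 2 = 2*(n+1) - j := by omega
        have e2 : 2*(n+1) - j - 2 + 1 = 2*(n+1) - (j+1) := by omega
        have e3 : 2*(n+1) - j - 2 = 2*(n+1) - (j+2) := by omega
        rw [e0, e1, e2, e3] at hFDj
        have hsp : f n (2*(n+1) - j - 2) = f n j := by
          have e4 : 2*(n+1) - j - 2 = 2*n - j := by omega
          rw [e4]
          exact IH hn j hj1 (by omega)
        rw [e3] at hsp
        rw [hsp] at hFDj
        linarith
      have hb : ∀ j, 1 ≤ j → j ≤ 2*(n+1) - 3 →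
          f (n+1) (j+2) = 2 * f (n+1) (j+1) - f (n+1) j + (-4) * f n j := by
        intro j hj1 hj2
        have hFDj := hFD (n+1) (by omega) j hj1 hj2
        have e0 : (n+1) - 1 = n := by omega
        rw [e0] at hFDj
        linarith
      have h1 : (fun k => f (n+1) (2*(n+1) - k)) 1 = f (n+1) 1 := by
        simp only
        have e : 2*(n+1) - 1 = 2*(n+1) - 1 := rfl
        rw [hep.1, hini.1, hS']
      have h2 : (fun k => f (n+1) (2*(n+1) - k)) 2 = f (n+1) 2 := by
        simp only
        rw [hep.2, hini.2, hS']
      have := rec2 (fun k => f (n+1) (2*(n+1) - k)) (f (n+1)) (fun j => (-4) * f n j)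
        (2*(n+1) - 3) ha hb h1 h2 k hk1 (by omega)
      exact this

/-- the weighted row sums -/
noncomputable def Wm (f : ℕ → ℕ → ℚ) (n p : ℕ) : ℚ :=
  ∑ k ∈ Finset.Icc 1 (2*n - 1), ((Nat.choose k p : ℕ) : ℚ) * f n k

lemma diamond (hFD : SatisfiesFD f) (hInit : Sec1 f) {n : ℕ} (hn : 2 ≤ n) (p : ℕ) :
    Wm f n p = -4 * (Wm f (n-1) (p+2) + 2 * Wm f (n-1) (p+1) + Wm f (n-1) p)
      + (∑ j ∈ Finset.Icc 1 (2*n - 3), f (n-1) j)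
        * ((Nat.choose 1 (p+2) + Nat.choose 2 (p+2)
            + Nat.choose (2*n) (p+2) + Nat.choose (2*n+1) (p+2) : ℕ) : ℚ) := by
  set S' := ∑ j ∈ Finset.Icc 1 (2*n - 3), f (n-1) j with hS'
  set K := 2*n - 3 with hK
  have hK1 : 1 ≤ K := by omega
  set q := p + 2 with hq
  -- endpoints
  have hsymprev : ∀ k, 1 ≤ k → k ≤ 2*(n-1) - 1 → f (n-1) (2*(n-1) - k) = f (n-1) k :=
    fun k hk1 hk2 => symm_all hFD hInit (n-1) (by omega) k hk1 hk2
  have hep := endpoints hFD hInit hn hsymprev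
  have hini := hInit.2 n hn
  -- the three shifted sums
  set G1 : ℕ → ℚ := fun k => ((Nat.choose k q : ℕ) : ℚ) * f n k with hG1
  set G2 : ℕ → ℚ := fun k => ((Nat.choose (k+1) q : ℕ) : ℚ) * f n k with hG2
  set G3 : ℕ → ℚ := fun k => ((Nat.choose (k+2) q : ℕ) : ℚ) * f n k with hG3
  have hT1 : ∑ k ∈ Finset.Icc 1 K, ((Nat.choose (k+2) q : ℕ) : ℚ) * f n (k+2)
      = ∑ k ∈ Finset.Icc 3 (K+2), G1 k := by
    apply Finset.sum_nbij' (fun k => k + 2) (fun k => k - 2)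
    · intro a ha; simp only [Finset.mem_Icc] at *; omega
    · intro a ha; simp only [Finset.mem_Icc] at *; omega
    · intro a ha; simp only [Finset.mem_Icc] at ha; omega
    · intro a ha; simp only [Finset.mem_Icc] at ha; omega
    · intro a ha; simp only [hG1]
  have hT2 : ∑ k ∈ Finset.Icc 1 K, ((Nat.choose (k+2) q : ℕ) : ℚ) * f n (k+1)
      = ∑ k ∈ Finset.Icc 2 (K+1), G2 k := by
    apply Finset.sum_nbij' (fun k => k + 1) (fun k => k - 1)
    · intro a ha; simp only [Finset.mem_Icc] at *; omega
    · intro a ha; simp only [Finset.mem_Icc] at *; omega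
    · intro a ha; simp only [Finset.mem_Icc] at ha; omega
    · intro a ha; simp only [Finset.mem_Icc] at ha; omega
    · intro a ha; simp only [hG2]
  -- completions of ranges
  have c1 : ∑ k ∈ Finset.Icc 3 (K+2), G1 k
      = ∑ k ∈ Finset.Icc 1 (K+2), G1 k - G1 1 - G1 2 := by
    have : Finset.Icc 1 (K+2) = insert 1 (insert 2 (Finset.Icc 3 (K+2))) := by
      ext j; simp only [Finset.mem_insert, Finset.mem_Icc]; omega
    rw [this, Finset.sum_insert (by simp only [Finset.mem_insert, Finset.mem_Icc]; omega),
      Finset.sum_insert (by simp only [Finset.mem_Icc]; omega)]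
    ring
  have c2 : ∑ k ∈ Finset.Icc 2 (K+1), G2 k
      = ∑ k ∈ Finset.Icc 1 (K+2), G2 k - G2 1 - G2 (K+2) := by
    have : Finset.Icc 1 (K+2) = insert 1 (insert (K+2) (Finset.Icc 2 (K+1))) := by
      ext j; simp only [Finset.mem_insert, Finset.mem_Icc]; omega
    rw [this, Finset.sum_insert (by simp only [Finset.mem_insert, Finset.mem_Icc]; omega),
      Finset.sum_insert (by simp only [Finset.mem_Icc]; omega)]
    ring
  have c3 : ∑ k ∈ Finset.Icc 1 K, G3 k
      = ∑ k ∈ Finset.Icc 1 (K+2), G3 k - G3 (K+1) - G3 (K+2) := by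
    have : Finset.Icc 1 (K+2) = insert (K+1) (insert (K+2) (Finset.Icc 1 K)) := by
      ext j; simp only [Finset.mem_insert, Finset.mem_Icc]; omega
    rw [this, Finset.sum_insert (by simp only [Finset.mem_insert, Finset.mem_Icc]; omega),
      Finset.sum_insert (by simp only [Finset.mem_Icc]; omega)]
    ring
  -- pointwise FD summed with weight C(k+2,q)
  have h0 : ∑ k ∈ Finset.Icc 1 K, ((Nat.choose (k+2) q : ℕ) : ℚ)
        * (f n (k+2) - 2 * f n (k+1) + f n k + 4 * f (n-1) k) = 0 := by
    apply Finset.sum_eq_zero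
    intro k hk
    simp only [Finset.mem_Icc] at hk
    rw [hFD n hn k hk.1 (by omega), mul_zero]
  have hexp : ∑ k ∈ Finset.Icc 1 K, ((Nat.choose (k+2) q : ℕ) : ℚ) * f n (k+2)
      - 2 * ∑ k ∈ Finset.Icc 1 K, ((Nat.choose (k+2) q : ℕ) : ℚ) * f n (k+1)
      + ∑ k ∈ Finset.Icc 1 K, G3 k
      + 4 * ∑ k ∈ Finset.Icc 1 K, ((Nat.choose (k+2) q : ℕ) : ℚ) * f (n-1) k = 0 := by
    rw [← h0]
    simp only [hG3, Finset.mul_sum, ← Finset.sum_add_distrib, ← Finset.sum_sub_distrib]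
    apply Finset.sum_congr rfl
    intro k hk
    ring
  -- Pascal: G1 - 2 G2 + G3 has weight C(k,p)
  have hPascal : ∑ k ∈ Finset.Icc 1 (K+2), G1 k
      - 2 * ∑ k ∈ Finset.Icc 1 (K+2), G2 k + ∑ k ∈ Finset.Icc 1 (K+2), G3 k
      = Wm f n p := by
    rw [Wm]
    have hrange : Finset.Icc 1 (2*n - 1) = Finset.Icc 1 (K+2) := by
      congr 1; omega
    rw [hrange]
    simp only [Finset.mul_sum, ← Finset.sum_add_distrib, ← Finset.sum_sub_distrib]
    apply Finset.sum_congr rfl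
    intro k hk
    simp only [hG1, hG2, hG3]
    have e1 : Nat.choose (k+2) q = Nat.choose k q + 2 * Nat.choose k (p+1) + Nat.choose k p := chooseDD k p
    have e2 : Nat.choose (k+1) q = Nat.choose k q + Nat.choose k (p+1) := by
      rw [hq, Nat.choose_succ_succ]
      ring
    rw [e1, e2]
    push_cast
    ring
  -- previous row weighted sums
  have hprev : ∑ k ∈ Finset.Icc 1 K, ((Nat.choose (k+2) q : ℕ) : ℚ) * f (n-1) k
      = Wm f (n-1) (p+2) + 2 * Wm f (n-1) (p+1) + Wm f (n-1) p := by
    simp only [Wm]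
    have hrange : Finset.Icc 1 (2*(n-1) - 1) = Finset.Icc 1 K := by
      congr 1; omega
    rw [hrange]
    simp only [Finset.mul_sum, ← Finset.sum_add_distrib]
    apply Finset.sum_congr rfl
    intro k hk
    rw [chooseDD k p]
    push_cast
    ring
  -- edge values
  have hend1 : f n (K+2) = S' := by
    have : K + 2 = 2*n - 1 := by omega
    rw [this]; exact hep.1
  have hend2 : f n (K+1) = 3 * S' := by
    have : K + 1 = 2*n - 2 := by omega
    rw [this]; exact hep.2
  have hf1 : f n 1 = S' := hini.1
  have hf2 : f n 2 = 3 * S' := hini.2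
  have eK3 : K+2+1 = 2*n := by omega
  have eK4 : K+2+2 = 2*n+1 := by omega
  have eK5 : K+1+2 = 2*n := by omega
  have hKq3 : Nat.choose (K+2+1) q = Nat.choose (2*n) q := by rw [eK3]
  have hKq4 : Nat.choose (K+2+2) q = Nat.choose (2*n+1) q := by rw [eK4]
  have hKq5 : Nat.choose (K+1+2) q = Nat.choose (2*n) q := by rw [eK5]
  -- final assembly
  rw [hT1, hT2, c3] at hexp
  rw [c1, c2] at hexp
  have : Wm f n p = G1 1 + G1 2 - 2*G2 1 - 2*G2 (K+2) + G3 (K+1) + G3 (K+2)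
      - 4 * (Wm f (n-1) (p+2) + 2 * Wm f (n-1) (p+1) + Wm f (n-1) p) := by
    rw [← hPascal, ← hprev]
    linarith
  rw [this]
  simp only [hG1, hG2, hG3, hf1, hf2, hend1, hend2, hKq3, hKq4, hKq5]
  push_cast
  ring

lemma choose121 (b z : ℕ) :
    Nat.choose b z + 2 * Nat.choose b (z+1) + Nat.choose b (z+2) = Nat.choose (b+2) (z+2) := by
  rw [chooseDD b z]
  ring

lemma bet121 {n m : ℕ} (p : ℕ) (hm : 2 ≤ m) (hmn : m ≤ n) :
    bet n m (p+2) + 2 * bet n m (p+1) + bet n m p = bet (n+1) m p := by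
  simp only [bet]
  have e1 : 2*(n+1) - 2*m = (2*n - 2*m) + 2 := by omega
  rw [e1]
  set d := 2*n - 2*m with hd
  have a1 : p + 2 + d + 2 = (p + d + 2) + 2 := by omega
  have a2 : p + 2 + d + 1 = (p + d + 1) + 2 := by omega
  have a3 : p + 1 + d + 2 = (p + d + 2) + 1 := by omega
  have a4 : p + 1 + d + 1 = (p + d + 1) + 1 := by omega
  have a5 : p + (d + 2) + 2 = (p + d + 2) + 2 := by omega
  have a6 : p + (d + 2) + 1 = (p + d + 1) + 2 := by omega
  rw [a1, a2, a3, a4, a5, a6]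
  have e2 : 2*(n+1) = 2*n + 2 := by omega
  rw [e2]
  rw [← choose121 (d+1) (p+d+2), ← choose121 (d+1) (p+d+1),
    ← choose121 (2*n) (p+d+2), ← choose121 (2*n) (p+d+1)]
  ring

lemma Wm_eq_Atab (hFD : SatisfiesFD f) (hInit : Sec1 f) :
    ∀ n, 1 ≤ n → ∀ p, Wm f n p = Atab n p := by
  intro n hn
  induction n, hn using Nat.le_induction with
  | base =>
    intro p
    rw [Wm, Atab]
    have h1 : (2*1 - 1 : ℕ) = 1 := by norm_num
    have h2 : Finset.Icc 2 1 = (∅ : Finset ℕ) := by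
      apply Finset.Icc_eq_empty; omega
    rw [h1, h2]
    simp [hInit.1]
  | succ n hn IH =>
    intro p
    have hd := diamond hFD hInit (show 2 ≤ n+1 by omega) p
    have en : (n+1) - 1 = n := by omega
    rw [en] at hd
    -- the previous row sum equals Sq n
    have hrowsum : ∑ j ∈ Finset.Icc 1 (2*(n+1) - 3), f n j = Sq n := by
      have e : 2*(n+1) - 3 = 2*n - 1 := by omega
      rw [e]
      have : ∑ j ∈ Finset.Icc 1 (2*n - 1), f n j = Wm f n 0 := by
        rw [Wm]
        apply Finset.sum_congr rfl
        intro k hk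
        simp
      rw [this, IH 0, ← Sq_eq_Atab n hn]
    rw [hrowsum, IH (p+2), IH (p+1), IH p] at hd
    have hsplit : Finset.Icc 2 (n+1) = insert (n+1) (Finset.Icc 2 n) := by
      ext j; simp only [Finset.mem_insert, Finset.mem_Icc]; omega
    have hfirst : (-4:ℚ) * ((-4:ℚ)^(n-1) * ((Nat.choose (2*n-1) ((p+2) + (2*n-2)) : ℕ) : ℚ)
          + 2 * ((-4:ℚ)^(n-1) * ((Nat.choose (2*n-1) ((p+1) + (2*n-2)) : ℕ) : ℚ))
          + (-4:ℚ)^(n-1) * ((Nat.choose (2*n-1) (p + (2*n-2)) : ℕ) : ℚ))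
        = (-4:ℚ)^((n+1)-1) * ((Nat.choose (2*(n+1)-1) (p + (2*(n+1)-2)) : ℕ) : ℚ) := by
      have hpow : (-4:ℚ)^((n+1)-1) = (-4:ℚ) * (-4:ℚ)^(n-1) := by
        have : (n+1) - 1 = (n-1) + 1 := by omega
        rw [this, pow_succ]
        ring
      have hch : Nat.choose (2*(n+1)-1) (p + (2*(n+1)-2))
          = Nat.choose (2*n-1) (p + (2*n-2))
            + 2 * Nat.choose (2*n-1) ((p+1) + (2*n-2))
            + Nat.choose (2*n-1) ((p+2) + (2*n-2)) := by
        have b1 : 2*(n+1) - 1 = (2*n-1) + 2 := by omega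
        have b2 : p + (2*(n+1)-2) = (p + (2*n-2)) + 2 := by omega
        have b3 : (p+1) + (2*n-2) = (p + (2*n-2)) + 1 := by omega
        have b4 : (p+2) + (2*n-2) = (p + (2*n-2)) + 2 := by omega
        rw [b1, b2, b3, b4, ← choose121]
      rw [hpow, hch]
      push_cast
      ring
    -- per-m terms combine
    have hterm : ∀ m ∈ Finset.Icc 2 n,
        (-4:ℚ) * ((-4:ℚ)^(n-m) * Sq (m-1) * ((bet n m (p+2) : ℕ) : ℚ)
          + 2 * ((-4:ℚ)^(n-m) * Sq (m-1) * ((bet n m (p+1) : ℕ) : ℚ))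
          + (-4:ℚ)^(n-m) * Sq (m-1) * ((bet n m p : ℕ) : ℚ))
        = (-4:ℚ)^((n+1)-m) * Sq (m-1) * ((bet (n+1) m p : ℕ) : ℚ) := by
      intro m hm
      simp only [Finset.mem_Icc] at hm
      have hpow : (-4:ℚ)^((n+1)-m) = (-4:ℚ) * (-4:ℚ)^(n-m) := by
        have : (n+1) - m = (n-m) + 1 := by omega
        rw [this, pow_succ]
        ring
      rw [hpow, ← bet121 p hm.1 hm.2]
      push_cast
      ring
    -- boundary term equals the new m = n+1 summand
    have hbound : Sq n * ((Nat.choose 1 (p+2) + Nat.choose 2 (p+2)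
            + Nat.choose (2*(n+1)) (p+2) + Nat.choose (2*(n+1)+1) (p+2) : ℕ) : ℚ)
        = (-4:ℚ)^((n+1)-(n+1)) * Sq ((n+1)-1) * ((bet (n+1) (n+1) p : ℕ) : ℚ) := by
      have e0 : (n+1) - (n+1) = 0 := by omega
      rw [e0, en, pow_zero, one_mul]
      congr 1
      have hbet : bet (n+1) (n+1) p
          = 2 * Nat.choose 1 (p+2) + Nat.choose 1 (p+1)
            + 2 * Nat.choose (2*(n+1)) (p+2) + Nat.choose (2*(n+1)) (p+1) := by
        simp only [bet]
        have e1 : 2*(n+1) - 2*(n+1) = 0 := by omega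
        rw [e1]
      rw [hbet]
      have p1 : Nat.choose 2 (p+2) = Nat.choose 1 (p+1) + Nat.choose 1 (p+2) := by
        have : (2:ℕ) = 1 + 1 := rfl
        rw [this, Nat.choose_succ_succ]
      have p2 : Nat.choose (2*(n+1)+1) (p+2) = Nat.choose (2*(n+1)) (p+1) + Nat.choose (2*(n+1)) (p+2) := by
        rw [Nat.choose_succ_succ]
      rw [p1, p2]
      push_cast
      ring
    have hsum : ∑ m ∈ Finset.Icc 2 n, (-4:ℚ)^((n+1)-m) * Sq (m-1) * ((bet (n+1) m p : ℕ) : ℚ)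
        = -4 * ((∑ m ∈ Finset.Icc 2 n, (-4:ℚ)^(n-m) * Sq (m-1) * ((bet n m (p+2) : ℕ) : ℚ))
            + 2 * (∑ m ∈ Finset.Icc 2 n, (-4:ℚ)^(n-m) * Sq (m-1) * ((bet n m (p+1) : ℕ) : ℚ))
            + ∑ m ∈ Finset.Icc 2 n, (-4:ℚ)^(n-m) * Sq (m-1) * ((bet n m p : ℕ) : ℚ)) := by
      rw [Finset.sum_congr rfl (fun m hm => (hterm m hm).symm)]
      simp only [Finset.mul_sum, ← Finset.sum_add_distrib]
    rw [hd]
    conv_rhs => rw [Atab, hsplit, Finset.sum_insert (by simp only [Finset.mem_Icc]; omega)]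
    rw [hsum, ← hbound, ← hfirst]
    simp only [Atab]
    ring

/-- Main algebraic theorem: row sums equal `Sq`. -/
theorem rowsum_eq_Sq (hFD : SatisfiesFD f) (hInit : Sec1 f) :
    ∀ n, 1 ≤ n → ∑ k ∈ Finset.Icc 1 (2*n - 1), f n k = Sq n := by
  intro n hn
  have : ∑ k ∈ Finset.Icc 1 (2*n - 1), f n k = Wm f n 0 := by
    rw [Wm]
    apply Finset.sum_congr rfl
    intro k hk
    simp
  rw [this, Wm_eq_Atab hFD hInit n hn 0, ← Sq_eq_Atab n hn]
end Fside

open Real Set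

noncomputable section SecantSide

/-- the secant function -/
def secf : ℝ → ℝ := fun u => 1 / Real.cos u

/-- the open interval where everything is smooth -/
def SI : Set ℝ := Set.Ioo (-(π/2)) (π/2)

lemma SI_open : IsOpen SI := isOpen_Ioo

lemma SI_zero : (0:ℝ) ∈ SI := by
  constructor <;> simp [Real.pi_pos, Real.pi_div_two_pos] <;> nlinarith [Real.pi_pos]

lemma cos_pos_SI {x : ℝ} (hx : x ∈ SI) : 0 < Real.cos x := Real.cos_pos_of_mem_Ioo hx

lemma cos_ne_SI {x : ℝ} (hx : x ∈ SI) : Real.cos x ≠ 0 := (cos_pos_SI hx).ne'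

/-- `iteratedDerivWithin` on an open set agrees with `iteratedDeriv` -/
lemma itdw_eq {f : ℝ → ℝ} {s : Set ℝ} (hs : IsOpen s) {x : ℝ} (hx : x ∈ s) (n : ℕ) :
    iteratedDerivWithin n f s x = iteratedDeriv n f x := by
  rw [iteratedDerivWithin_eq_iteratedFDerivWithin, iteratedDeriv_eq_iteratedFDeriv,
    iteratedFDerivWithin_of_isOpen n hs hx]

/-- on an open set on which `f` is smooth, the iterated derivatives are differentiable -/
lemma diffAt_iter {f : ℝ → ℝ} {s : Set ℝ} (hs : IsOpen s)
    (hf : ContDiffOn ℝ ⊤ f s) {x : ℝ} (hx : x ∈ s) (i : ℕ) :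
    DifferentiableAt ℝ (iteratedDeriv i f) x := by
  have h1 : DifferentiableOn ℝ (iteratedDerivWithin i f s) s :=
    hf.differentiableOn_iteratedDerivWithin (by exact_mod_cast WithTop.coe_lt_top _)
      (hs.uniqueDiffOn)
  have h2 : DifferentiableAt ℝ (iteratedDerivWithin i f s) x :=
    (h1 x hx).differentiableAt (hs.mem_nhds hx)
  apply h2.congr_of_eventuallyEq
  filter_upwards [hs.mem_nhds hx] with y hy
  exact (itdw_eq hs hy i).symm

/-- derivative of the iterated derivative within an open smooth set -/
lemma hasDerivAt_iter {f : ℝ → ℝ} {s : Set ℝ} (hs : IsOpen s)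
    (hf : ContDiffOn ℝ ⊤ f s) {x : ℝ} (hx : x ∈ s) (i : ℕ) :
    HasDerivAt (iteratedDeriv i f) (iteratedDeriv (i+1) f x) x := by
  have := (diffAt_iter hs hf hx i).hasDerivAt
  rwa [show deriv (iteratedDeriv i f) x = iteratedDeriv (i+1) f x from
    (congrFun (iteratedDeriv_succ (n := i)) x).symm] at this

/-- general Leibniz rule at points of an open set of smoothness -/
lemma leibniz_iter {f g : ℝ → ℝ} {s : Set ℝ} (hs : IsOpen s)
    (hf : ContDiffOn ℝ ⊤ f s) (hg : ContDiffOn ℝ ⊤ g s) (n : ℕ) :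
    ∀ x ∈ s, iteratedDeriv n (fun y => f y * g y) x
      = ∑ i ∈ Finset.range (n+1), (n.choose i : ℝ)
          * iteratedDeriv i f x * iteratedDeriv (n-i) g x := by
  induction n with
  | zero => intro x hx; simp
  | succ n IH =>
    intro x hx
    rw [iteratedDeriv_succ]
    have hev : iteratedDeriv n (fun y => f y * g y)
        =ᶠ[nhds x] (fun y => ∑ i ∈ Finset.range (n+1), (n.choose i : ℝ)
          * iteratedDeriv i f y * iteratedDeriv (n-i) g y) := by
      filter_upwards [hs.mem_nhds hx] with y hy
      exact IH y hy
    rw [hev.deriv_eq]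
    have hder : HasDerivAt (fun y => ∑ i ∈ Finset.range (n+1), (n.choose i : ℝ)
          * iteratedDeriv i f y * iteratedDeriv (n-i) g y)
        (∑ i ∈ Finset.range (n+1), (n.choose i : ℝ)
          * (iteratedDeriv (i+1) f x * iteratedDeriv (n-i) g x
             + iteratedDeriv i f x * iteratedDeriv (n-i+1) g x)) x := by
      apply HasDerivAt.fun_sum
      intro i hi
      have h1 := (hasDerivAt_iter hs hf hx i).mul (hasDerivAt_iter hs hg hx (n-i))
      have h2 := h1.const_mul ((n.choose i : ℝ))
      have hfun : (fun y => (n.choose i : ℝ) * iteratedDeriv i f y * iteratedDeriv (n-i) g y)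
          = fun y => (n.choose i : ℝ) * (iteratedDeriv i f y * iteratedDeriv (n-i) g y) := by
        funext y; ring
      rw [hfun]
      exact h2
    rw [hder.deriv]
    -- Pascal recombination
    have expand : ∑ i ∈ Finset.range (n+1), (n.choose i : ℝ)
          * (iteratedDeriv (i+1) f x * iteratedDeriv (n-i) g x
             + iteratedDeriv i f x * iteratedDeriv (n-i+1) g x)
        = (∑ i ∈ Finset.range (n+1), (n.choose i : ℝ)
            * iteratedDeriv (i+1) f x * iteratedDeriv (n-i) g x)
          + ∑ i ∈ Finset.range (n+1), (n.choose i : ℝ)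
            * iteratedDeriv i f x * iteratedDeriv (n-i+1) g x := by
      rw [← Finset.sum_add_distrib]
      apply Finset.sum_congr rfl
      intro i hi
      ring
    rw [expand]
    -- first sum: shift index
    have shift : ∑ i ∈ Finset.range (n+1), (n.choose i : ℝ)
          * iteratedDeriv (i+1) f x * iteratedDeriv (n-i) g x
        = ∑ i ∈ Finset.range (n+2), (if i = 0 then 0 else (n.choose (i-1) : ℝ))
            * iteratedDeriv i f x * iteratedDeriv (n+1-i) g x := by
      rw [Finset.sum_range_succ' (fun i => (if i = 0 then 0 else (n.choose (i-1) : ℝ))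
            * iteratedDeriv i f x * iteratedDeriv (n+1-i) g x) (n+1)]
      simp only [eq_self_iff_true, if_true, zero_mul, add_zero]
      apply Finset.sum_congr rfl
      intro i hi
      have e1 : n + 1 - (i+1) = n - i := by omega
      rw [e1, if_neg (Nat.succ_ne_zero i), Nat.add_sub_cancel]
    have second : ∑ i ∈ Finset.range (n+1), (n.choose i : ℝ)
          * iteratedDeriv i f x * iteratedDeriv (n-i+1) g x
        = ∑ i ∈ Finset.range (n+2), (if i = n+1 then 0 else (n.choose i : ℝ))
            * iteratedDeriv i f x * iteratedDeriv (n+1-i) g x := by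
      conv_rhs => rw [Finset.sum_range_succ]
      simp only [eq_self_iff_true, if_true, zero_mul, add_zero]
      apply Finset.sum_congr rfl
      intro i hi
      simp only [Finset.mem_range] at hi
      have e1 : n - i + 1 = n + 1 - i := by omega
      rw [e1, if_neg (by omega)]
    rw [shift, second, ← Finset.sum_add_distrib]
    apply Finset.sum_congr rfl
    intro i hi
    simp only [Finset.mem_range] at hi
    rcases Nat.eq_zero_or_pos i with rfl | hipos
    · simp
    · rcases Nat.lt_or_ge i (n+1) with hlt | hge
      · rw [if_neg (by omega), if_neg (by omega)]
        have : n.choose (i-1) + n.choose i = (n+1).choose i := by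
          have e : i = (i-1) + 1 := by omega
          rw [e, Nat.choose_succ_succ]
          congr 1 <;> omega
        push_cast [← this]
        ring
      · have hi1 : i = n+1 := by omega
        subst hi1
        rw [if_neg (by omega), if_pos rfl]
        have : n.choose n = (n+1).choose (n+1) := by simp
        push_cast [Nat.choose_self, Nat.sub_self]
        ring


/-! ### basic functions and their smoothness -/

def Ff : ℝ → ℝ := fun u => Real.log (1 / Real.cos u + Real.sin u / Real.cos u)
def c2f : ℝ → ℝ := fun u => Real.cos (2*u)
def s2f : ℝ → ℝ := fun u => Real.sin (2*u)
def sec1 : ℝ → ℝ := fun u => Real.sin u / Real.cos u ^ 2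
def sec2 : ℝ → ℝ := fun u => 2 / Real.cos u ^ 3 - 1 / Real.cos u
def Phic : ℝ → ℝ := fun u => secf u * c2f u
def Phis : ℝ → ℝ := fun u => Ff u * s2f u
def Phic1 : ℝ → ℝ := fun u => sec1 u * c2f u - 2 * secf u * s2f u
def Phic2 : ℝ → ℝ := fun u => sec2 u * c2f u - 4 * sec1 u * s2f u - 4 * secf u * c2f u
def Phis1 : ℝ → ℝ := fun u => secf u * s2f u + 2 * Ff u * c2f u
def Phis2 : ℝ → ℝ := fun u => sec1 u * s2f u + 4 * secf u * c2f u - 4 * Ff u * s2f u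

lemma sin_lb_SI {x : ℝ} (hx : x ∈ SI) : 0 < 1 + Real.sin x := by
  rcases lt_or_eq_of_le (Real.neg_one_le_sin x) with h | h
  · linarith
  · exfalso
    have h2 := Real.sin_sq_add_cos_sq x
    have h3 := cos_pos_SI hx
    rw [← h] at h2
    nlinarith

lemma garg_pos {x : ℝ} (hx : x ∈ SI) : 0 < 1 / Real.cos x + Real.sin x / Real.cos x := by
  have h1 := cos_pos_SI hx
  have h2 := sin_lb_SI hx
  rw [← add_div]
  positivity

lemma contDiffOn_secf : ContDiffOn ℝ ⊤ secf SI :=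
  ContDiffOn.div contDiffOn_const (Real.contDiff_cos.contDiffOn) (fun x hx => cos_ne_SI hx)

lemma contDiffOn_sec1 : ContDiffOn ℝ ⊤ sec1 SI :=
  ContDiffOn.div (Real.contDiff_sin.contDiffOn) ((Real.contDiff_cos.contDiffOn).pow 2)
    (fun x hx => pow_ne_zero 2 (cos_ne_SI hx))

lemma contDiffOn_sec2 : ContDiffOn ℝ ⊤ sec2 SI := by
  apply ContDiffOn.sub
  · exact ContDiffOn.div contDiffOn_const ((Real.contDiff_cos.contDiffOn).pow 3)
      (fun x hx => pow_ne_zero 3 (cos_ne_SI hx))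
  · exact ContDiffOn.div contDiffOn_const (Real.contDiff_cos.contDiffOn)
      (fun x hx => cos_ne_SI hx)

lemma contDiff_c2f : ContDiff ℝ ⊤ c2f := Real.contDiff_cos.comp (contDiff_const.mul contDiff_id)
lemma contDiff_s2f : ContDiff ℝ ⊤ s2f := Real.contDiff_sin.comp (contDiff_const.mul contDiff_id)

lemma contDiffOn_Ff : ContDiffOn ℝ ⊤ Ff SI := by
  apply ContDiffOn.log
  · apply ContDiffOn.add
    · exact ContDiffOn.div contDiffOn_const (Real.contDiff_cos.contDiffOn)
        (fun x hx => cos_ne_SI hx)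
    · exact ContDiffOn.div (Real.contDiff_sin.contDiffOn) (Real.contDiff_cos.contDiffOn)
        (fun x hx => cos_ne_SI hx)
  · exact fun x hx => (garg_pos hx).ne'

lemma contDiffOn_Phic : ContDiffOn ℝ ⊤ Phic SI :=
  contDiffOn_secf.mul (contDiff_c2f.contDiffOn)
lemma contDiffOn_Phis : ContDiffOn ℝ ⊤ Phis SI :=
  contDiffOn_Ff.mul (contDiff_s2f.contDiffOn)
lemma contDiffOn_Phic2 : ContDiffOn ℝ ⊤ Phic2 SI := by
  apply ContDiffOn.sub
  apply ContDiffOn.sub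
  · exact contDiffOn_sec2.mul (contDiff_c2f.contDiffOn)
  · exact (contDiffOn_const.mul contDiffOn_sec1).mul (contDiff_s2f.contDiffOn)
  · exact (contDiffOn_const.mul contDiffOn_secf).mul (contDiff_c2f.contDiffOn)
lemma contDiffOn_Phis2 : ContDiffOn ℝ ⊤ Phis2 SI := by
  apply ContDiffOn.sub
  apply ContDiffOn.add
  · exact contDiffOn_sec1.mul (contDiff_s2f.contDiffOn)
  · exact (contDiffOn_const.mul contDiffOn_secf).mul (contDiff_c2f.contDiffOn)
  · exact (contDiffOn_const.mul contDiffOn_Ff).mul (contDiff_s2f.contDiffOn)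

/-! ### pointwise derivatives on SI -/

lemma hasDerivAt_c2f (x : ℝ) : HasDerivAt c2f (-2 * Real.sin (2*x)) x := by
  have h := ((hasDerivAt_id' x).const_mul (2:ℝ)).cos
  unfold c2f
  convert h using 1
  simp
  ring

lemma hasDerivAt_s2f (x : ℝ) : HasDerivAt s2f (2 * Real.cos (2*x)) x := by
  have h := ((hasDerivAt_id' x).const_mul (2:ℝ)).sin
  unfold s2f
  convert h using 1
  simp
  ring

lemma hasDerivAt_secf {x : ℝ} (hx : x ∈ SI) : HasDerivAt secf (sec1 x) x := by
  have h := (Real.hasDerivAt_cos x).fun_inv (cos_ne_SI hx)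
  have e : secf = fun y => (Real.cos y)⁻¹ := by
    funext y; simp [secf, one_div]
  rw [e, sec1]
  refine h.congr_deriv ?_
  symm
  field_simp

lemma hasDerivAt_sec1 {x : ℝ} (hx : x ∈ SI) : HasDerivAt sec1 (sec2 x) x := by
  have hcos := cos_ne_SI hx
  have h := (Real.hasDerivAt_sin x).fun_div ((Real.hasDerivAt_cos x).fun_pow 2)
    (pow_ne_zero 2 hcos)
  rw [show sec1 = fun y => Real.sin y / Real.cos y ^ 2 from rfl]
  refine h.congr_deriv ?_
  symm
  simp only [sec2]
  field_simp
  linear_combination (-2 * Real.cos x) * (Real.sin_sq_add_cos_sq x)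

lemma hasDerivAt_Ff {x : ℝ} (hx : x ∈ SI) : HasDerivAt Ff (secf x) x := by
  have hcos := cos_ne_SI hx
  have hg : HasDerivAt (fun y => 1 / Real.cos y + Real.sin y / Real.cos y)
      (secf x * (1 / Real.cos x + Real.sin x / Real.cos x)) x := by
    have h1 : HasDerivAt (fun y => 1 / Real.cos y) (sec1 x) x := hasDerivAt_secf hx
    have h2 : HasDerivAt (fun y => Real.sin y / Real.cos y) (1 / Real.cos x ^ 2) x := by
      have := (Real.hasDerivAt_sin x).fun_div (Real.hasDerivAt_cos x) hcos
      refine this.congr_deriv ?_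
      symm
      have hs := Real.sin_sq_add_cos_sq x
      field_simp
      nlinarith
    have := h1.fun_add h2
    refine this.congr_deriv ?_
    symm
    simp only [secf, sec1]
    field_simp
    ring
  have := hg.log (garg_pos hx).ne'
  rw [show Ff = fun y => Real.log (1 / Real.cos y + Real.sin y / Real.cos y) from rfl]
  convert this using 1
  field_simp
  rw [mul_div_assoc, div_self (sin_lb_SI hx).ne', mul_one]

lemma hasDerivAt_Phic {x : ℝ} (hx : x ∈ SI) : HasDerivAt Phic (Phic1 x) x := by
  have h := (hasDerivAt_secf hx).fun_mul (hasDerivAt_c2f x)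
  rw [show Phic = fun u => secf u * c2f u from rfl, Phic1]
  refine h.congr_deriv ?_
  symm
  simp [c2f, s2f]
  ring

lemma hasDerivAt_Phic1 {x : ℝ} (hx : x ∈ SI) : HasDerivAt Phic1 (Phic2 x) x := by
  have h1 := (hasDerivAt_sec1 hx).fun_mul (hasDerivAt_c2f x)
  have h2 := (((hasDerivAt_secf hx).const_mul (2:ℝ)).fun_mul (hasDerivAt_s2f x))
  have h := h1.fun_sub h2
  rw [show Phic1 = fun u => sec1 u * c2f u - 2 * secf u * s2f u from rfl, Phic2]
  refine h.congr_deriv ?_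
  symm
  simp [c2f, s2f]
  ring

lemma hasDerivAt_Phis {x : ℝ} (hx : x ∈ SI) : HasDerivAt Phis (Phis1 x) x := by
  have h := (hasDerivAt_Ff hx).fun_mul (hasDerivAt_s2f x)
  rw [show Phis = fun u => Ff u * s2f u from rfl, Phis1]
  refine h.congr_deriv ?_
  symm
  simp [c2f, s2f]
  ring

lemma hasDerivAt_Phis1 {x : ℝ} (hx : x ∈ SI) : HasDerivAt Phis1 (Phis2 x) x := by
  have h1 := (hasDerivAt_secf hx).fun_mul (hasDerivAt_s2f x)
  have h2 := ((hasDerivAt_Ff hx).const_mul (2:ℝ)).fun_mul (hasDerivAt_c2f x)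
  have h := h1.fun_add h2
  rw [show Phis1 = fun u => secf u * s2f u + 2 * Ff u * c2f u from rfl, Phis2]
  refine h.congr_deriv ?_
  symm
  simp [c2f, s2f]
  ring

/-! ### shifting iterated derivatives through explicit derivative formulas -/


lemma deriv_eqOn' {h h1 : ℝ → ℝ} {s : Set ℝ} (hs : IsOpen s)
    (H : ∀ x ∈ s, HasDerivAt h (h1 x) x) : Set.EqOn (deriv h) h1 s :=
  fun x hx => (H x hx).deriv

lemma iter_shift1 {h h1 : ℝ → ℝ} {s : Set ℝ} (hs : IsOpen s)
    (H : ∀ x ∈ s, HasDerivAt h (h1 x) x) (m : ℕ) {x : ℝ} (hx : x ∈ s) :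
    iteratedDeriv (m+1) h x = iteratedDeriv m h1 x := by
  rw [iteratedDeriv_succ']
  exact (deriv_eqOn' hs H).iteratedDeriv_of_isOpen hs m hx

lemma iter_shift2 {h h1 h2 : ℝ → ℝ} {s : Set ℝ} (hs : IsOpen s)
    (H1 : ∀ x ∈ s, HasDerivAt h (h1 x) x) (H2 : ∀ x ∈ s, HasDerivAt h1 (h2 x) x)
    (m : ℕ) {x : ℝ} (hx : x ∈ s) :
    iteratedDeriv (m+2) h x = iteratedDeriv m h2 x := by
  have e : m + 2 = (m + 1) + 1 := rfl
  rw [e, iteratedDeriv_succ']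
  have : Set.EqOn (deriv h) h1 s := deriv_eqOn' hs H1
  rw [this.iteratedDeriv_of_isOpen hs (m+1) hx]
  exact iter_shift1 hs H2 m hx

lemma itd_zero_fun (n : ℕ) : iteratedDeriv n (fun _ : ℝ => (0:ℝ)) = fun _ => (0:ℝ) := by
  induction n with
  | zero => simp [iteratedDeriv_zero]
  | succ n IH => rw [iteratedDeriv_succ, IH]; simp

/-! ### iterated derivatives of cos 2u and sin 2u -/

lemma c2s2_pairs : ∀ r : ℕ,
    (iteratedDeriv (2*r) c2f = fun x => (-4:ℝ)^r * Real.cos (2*x))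
    ∧ (iteratedDeriv (2*r+1) c2f = fun x => (-4:ℝ)^r * (-2) * Real.sin (2*x))
    ∧ (iteratedDeriv (2*r) s2f = fun x => (-4:ℝ)^r * Real.sin (2*x))
    ∧ (iteratedDeriv (2*r+1) s2f = fun x => (-4:ℝ)^r * 2 * Real.cos (2*x)) := by
  have dcos : ∀ c : ℝ, deriv (fun x => c * Real.cos (2*x)) = fun x => c * (-2) * Real.sin (2*x) := by
    intro c
    funext x
    have := ((hasDerivAt_c2f x).const_mul c).deriv
    simp only [c2f] at this
    rw [show (fun x => c * Real.cos (2*x)) = fun y => c * Real.cos (2*y) from rfl, this]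
    ring
  have dsin : ∀ c : ℝ, deriv (fun x => c * Real.sin (2*x)) = fun x => c * 2 * Real.cos (2*x) := by
    intro c
    funext x
    have := ((hasDerivAt_s2f x).const_mul c).deriv
    simp only [s2f] at this
    rw [show (fun x => c * Real.sin (2*x)) = fun y => c * Real.sin (2*y) from rfl, this]
    ring
  intro r
  induction r with
  | zero =>
    refine ⟨?_, ?_, ?_, ?_⟩
    · funext x; simp [c2f]
    · rw [show 2*0+1 = 0+1 from rfl, iteratedDeriv_succ, iteratedDeriv_zero]
      rw [show c2f = fun x => (1:ℝ) * Real.cos (2*x) by funext x; simp [c2f]]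
      rw [dcos 1]
      funext x; ring
    · funext x; simp [s2f]
    · rw [show 2*0+1 = 0+1 from rfl, iteratedDeriv_succ, iteratedDeriv_zero]
      rw [show s2f = fun x => (1:ℝ) * Real.sin (2*x) by funext x; simp [s2f]]
      rw [dsin 1]
      funext x; ring
  | succ r IH =>
    obtain ⟨h1, h2, h3, h4⟩ := IH
    have e1 : 2*(r+1) = (2*r+1) + 1 := by omega
    have e2 : 2*(r+1)+1 = (2*(r+1)) + 1 := rfl
    have g1 : iteratedDeriv (2*(r+1)) c2f = fun x => (-4:ℝ)^(r+1) * Real.cos (2*x) := by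
      rw [e1, iteratedDeriv_succ, h2, dsin ((-4:ℝ)^r * (-2))]
      funext x
      rw [pow_succ]
      ring
    have g3 : iteratedDeriv (2*(r+1)) s2f = fun x => (-4:ℝ)^(r+1) * Real.sin (2*x) := by
      rw [e1, iteratedDeriv_succ, h4, dcos ((-4:ℝ)^r * 2)]
      funext x
      rw [pow_succ]
      ring
    refine ⟨g1, ?_, g3, ?_⟩
    · rw [e2, iteratedDeriv_succ, g1, dcos ((-4:ℝ)^(r+1))]
    · rw [e2, iteratedDeriv_succ, g3, dsin ((-4:ℝ)^(r+1))]

lemma Kc_even (r : ℕ) : iteratedDeriv (2*r) c2f 0 = (-4:ℝ)^r := by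
  rw [(c2s2_pairs r).1]; simp
lemma Kc_odd (r : ℕ) : iteratedDeriv (2*r+1) c2f 0 = 0 := by
  rw [(c2s2_pairs r).2.1]; simp
lemma Ks_even (r : ℕ) : iteratedDeriv (2*r) s2f 0 = 0 := by
  rw [(c2s2_pairs r).2.2.1]; simp
lemma Ks_odd (r : ℕ) : iteratedDeriv (2*r+1) s2f 0 = 2 * (-4:ℝ)^r := by
  rw [(c2s2_pairs r).2.2.2]; simp [mul_comm]

/-! ### parity of sec -/

lemma E_odd (j : ℕ) : iteratedDeriv (2*j+1) secf 0 = 0 := by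
  have hev : (fun x : ℝ => secf (-x)) = secf := by
    funext x; simp [secf, Real.cos_neg]
  have := iteratedDeriv_comp_neg (2*j+1) secf 0
  rw [hev, neg_zero] at this
  have hpow : ((-1:ℝ))^(2*j+1) = -1 := by
    rw [pow_succ, pow_mul]
    norm_num
  rw [hpow] at this
  simp only [smul_eq_mul, neg_one_mul] at this
  linarith

/-! ### values of F derivatives -/

lemma Ff_zero : Ff 0 = 0 := by simp [Ff]

lemma Ff_succ (m : ℕ) : iteratedDeriv (m+1) Ff 0 = iteratedDeriv m secf 0 :=
  iter_shift1 SI_open (fun x hx => hasDerivAt_Ff hx) m SI_zero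

lemma Ff_even (j : ℕ) : iteratedDeriv (2*j) Ff 0 = 0 := by
  rcases Nat.eq_zero_or_pos j with rfl | hj
  · simpa [iteratedDeriv_zero] using Ff_zero
  · have e : 2*j = (2*(j-1)+1) + 1 := by omega
    rw [e, Ff_succ]
    exact E_odd (j-1)

/-! ### even/odd splitting of sums -/

lemma sum_even_odd (h : ℕ → ℝ) : ∀ n : ℕ, ∑ i ∈ Finset.range (2*n+1), h i
    = ∑ j ∈ Finset.range (n+1), h (2*j) + ∑ j ∈ Finset.range n, h (2*j+1) := by
  intro n
  induction n with
  | zero => simp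
  | succ n IH =>
    have e : 2*(n+1)+1 = (2*n+1) + 1 + 1 := by omega
    rw [e, Finset.sum_range_succ, Finset.sum_range_succ, IH,
      Finset.sum_range_succ (fun j => h (2*j)) (n+1),
      Finset.sum_range_succ (fun j => h (2*j+1)) n]
    have e1 : 2*n+1 = 2*n+1 := rfl
    have e2 : 2*(n+1) = 2*n+1+1 := by omega
    rw [e2]
    ring

/-! ### the key derivative quantities -/

def Ese (m : ℕ) : ℝ := iteratedDeriv m secf 0
def DC (j : ℕ) : ℝ := iteratedDeriv (2*j) Phic 0
def DS (j : ℕ) : ℝ := iteratedDeriv (2*j) Phis 0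

lemma Ese_zero : Ese 0 = 1 := by simp [Ese, iteratedDeriv_zero, secf]

lemma DC_closed (n : ℕ) : DC n
    = ∑ j ∈ Finset.range (n+1), ((2*n).choose (2*j) : ℝ) * Ese (2*j) * (-4:ℝ)^(n-j) := by
  rw [DC, show Phic = fun y => secf y * c2f y from rfl]
  rw [leibniz_iter SI_open contDiffOn_secf contDiff_c2f.contDiffOn (2*n) 0 SI_zero]
  rw [show 2*n+1 = 2*n+1 from rfl]
  rw [sum_even_odd (fun i => ((2*n).choose i : ℝ) * iteratedDeriv i secf 0
      * iteratedDeriv (2*n - i) c2f 0) n]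
  have hodd : ∑ j ∈ Finset.range n, ((2*n).choose (2*j+1) : ℝ)
      * iteratedDeriv (2*j+1) secf 0 * iteratedDeriv (2*n - (2*j+1)) c2f 0 = 0 := by
    apply Finset.sum_eq_zero
    intro j hj
    rw [E_odd j]
    ring
  rw [hodd, add_zero]
  apply Finset.sum_congr rfl
  intro j hj
  simp only [Finset.mem_range] at hj
  have e : 2*n - 2*j = 2*(n-j) := by omega
  rw [e, Kc_even, Ese]

lemma DS_closed (n : ℕ) : DS n
    = ∑ j ∈ Finset.range n, ((2*n).choose (2*j+1) : ℝ) * Ese (2*j) * (2 * (-4:ℝ)^(n-1-j)) := by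
  rw [DS, show Phis = fun y => Ff y * s2f y from rfl]
  rw [leibniz_iter SI_open contDiffOn_Ff contDiff_s2f.contDiffOn (2*n) 0 SI_zero]
  rw [sum_even_odd (fun i => ((2*n).choose i : ℝ) * iteratedDeriv i Ff 0
      * iteratedDeriv (2*n - i) s2f 0) n]
  have heven : ∑ j ∈ Finset.range (n+1), ((2*n).choose (2*j) : ℝ)
      * iteratedDeriv (2*j) Ff 0 * iteratedDeriv (2*n - 2*j) s2f 0 = 0 := by
    apply Finset.sum_eq_zero
    intro j hj
    rw [Ff_even j]
    ring
  rw [heven, zero_add]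
  apply Finset.sum_congr rfl
  intro j hj
  simp only [Finset.mem_range] at hj
  have e : 2*n - (2*j+1) = 2*(n-1-j)+1 := by omega
  rw [e, Ks_odd, show 2*j+1 = (2*j)+1 from rfl, Ff_succ, Ese]

/-! ### the functional identity -/

lemma funident {x : ℝ} (hx : x ∈ SI) :
    sec2 x + 2 * secf x + (Phic2 x + 4 * Phic x) - (Phis2 x + 4 * Phis x) = 0 := by
  have hcos := cos_ne_SI hx
  simp only [sec2, secf, sec1, Phic2, Phic, Phis2, Phis, c2f, s2f,
    Real.cos_two_mul, Real.sin_two_mul]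
  field_simp
  linear_combination (-10 * Real.cos x ^ 2) * (Real.sin_sq_add_cos_sq x)

/-! ### the linear extraction: Zid -/

lemma Zid (n : ℕ) :
    Ese (2*(n+1)) + 2 * Ese (2*n) + (DC (n+1) + 4 * DC n) - (DS (n+1) + 4 * DS n) = 0 := by
  -- all six functions with their ContDiffOn facts
  have hU : UniqueDiffOn ℝ SI := SI_open.uniqueDiffOn
  have hx0 := SI_zero
  set m := 2*n with hm
  -- convert each piece to an iterated derivative of the companions at 0
  have hsec : Ese (2*(n+1)) = iteratedDeriv m sec2 0 := by
    rw [Ese, show 2*(n+1) = m + 2 by omega]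
    exact iter_shift2 SI_open (fun x hx => hasDerivAt_secf hx)
      (fun x hx => hasDerivAt_sec1 hx) m hx0
  have hphic : DC (n+1) = iteratedDeriv m Phic2 0 := by
    rw [DC, show 2*(n+1) = m + 2 by omega]
    exact iter_shift2 SI_open (fun x hx => hasDerivAt_Phic hx)
      (fun x hx => hasDerivAt_Phic1 hx) m hx0
  have hphis : DS (n+1) = iteratedDeriv m Phis2 0 := by
    rw [DS, show 2*(n+1) = m + 2 by omega]
    exact iter_shift2 SI_open (fun x hx => hasDerivAt_Phis hx)
      (fun x hx => hasDerivAt_Phis1 hx) m hx0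
  -- the combination function vanishes on SI
  have hzero : iteratedDeriv m
      (fun u => sec2 u + 2 * secf u + (Phic2 u + 4 * Phic u) - (Phis2 u + 4 * Phis u)) 0 = 0 := by
    have hEq : Set.EqOn (fun u => sec2 u + 2 * secf u + (Phic2 u + 4 * Phic u)
        - (Phis2 u + 4 * Phis u)) (fun _ => (0:ℝ)) SI := fun x hx => funident hx
    rw [hEq.iteratedDeriv_of_isOpen SI_open m hx0, itd_zero_fun]
  -- linearity inside iteratedDeriv at 0 via within-versions
  have hU' := hU
  have hlin : iteratedDeriv m
      (fun u => sec2 u + 2 * secf u + (Phic2 u + 4 * Phic u) - (Phis2 u + 4 * Phis u)) 0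
      = iteratedDeriv m sec2 0 + 2 * iteratedDeriv m secf 0
        + (iteratedDeriv m Phic2 0 + 4 * iteratedDeriv m Phic 0)
        - (iteratedDeriv m Phis2 0 + 4 * iteratedDeriv m Phis 0) := by
    have cA : ContDiffOn ℝ m sec2 SI := contDiffOn_sec2.of_le le_top
    have cB : ContDiffOn ℝ m secf SI := contDiffOn_secf.of_le le_top
    have cC : ContDiffOn ℝ m Phic2 SI := contDiffOn_Phic2.of_le le_top
    have cD : ContDiffOn ℝ m Phic SI := contDiffOn_Phic.of_le le_top
    have cE : ContDiffOn ℝ m Phis2 SI := contDiffOn_Phis2.of_le le_top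
    have cF : ContDiffOn ℝ m Phis SI := contDiffOn_Phis.of_le le_top
    have cB2 : ContDiffOn ℝ m (fun u => (2:ℝ) * secf u) SI := contDiffOn_const.mul cB
    have cD4 : ContDiffOn ℝ m (fun u => (4:ℝ) * Phic u) SI := contDiffOn_const.mul cD
    have cF4 : ContDiffOn ℝ m (fun u => (4:ℝ) * Phis u) SI := contDiffOn_const.mul cF
    have c1 : ContDiffOn ℝ m (fun u => sec2 u + 2 * secf u) SI := cA.add cB2
    have c2 : ContDiffOn ℝ m (fun u => Phic2 u + 4 * Phic u) SI := cC.add cD4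
    have c3 : ContDiffOn ℝ m (fun u => Phis2 u + 4 * Phis u) SI := cE.add cF4
    have c12 : ContDiffOn ℝ m (fun u => (sec2 u + 2 * secf u) + (Phic2 u + 4 * Phic u)) SI :=
      c1.add c2
    rw [← itdw_eq SI_open hx0 m]
    have eA : (fun u => sec2 u + 2 * secf u + (Phic2 u + 4 * Phic u) - (Phis2 u + 4 * Phis u))
        = ((fun u => (sec2 u + 2 * secf u) + (Phic2 u + 4 * Phic u))
           - (fun u => Phis2 u + 4 * Phis u)) := rfl
    rw [eA, iteratedDerivWithin_sub hx0 hU (c12 0 hx0) (c3 0 hx0)]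
    have eB : (fun u => (sec2 u + 2 * secf u) + (Phic2 u + 4 * Phic u))
        = ((fun u => sec2 u + 2 * secf u) + (fun u => Phic2 u + 4 * Phic u)) := rfl
    rw [eB, iteratedDerivWithin_add hx0 hU (c1 0 hx0) (c2 0 hx0)]
    have eC : (fun u => sec2 u + 2 * secf u) = (sec2 + (fun u => (2:ℝ) * secf u)) := rfl
    rw [eC, iteratedDerivWithin_add hx0 hU (cA 0 hx0) (cB2 0 hx0)]
    have eD : (fun u => Phic2 u + 4 * Phic u) = (Phic2 + (fun u => (4:ℝ) * Phic u)) := rfl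
    rw [eD, iteratedDerivWithin_add hx0 hU (cC 0 hx0) (cD4 0 hx0)]
    have eE : (fun u => Phis2 u + 4 * Phis u) = (Phis2 + (fun u => (4:ℝ) * Phis u)) := rfl
    rw [eE, iteratedDerivWithin_add hx0 hU (cE 0 hx0) (cF4 0 hx0)]
    rw [iteratedDerivWithin_const_mul hx0 hU (2:ℝ) (cB 0 hx0),
      iteratedDerivWithin_const_mul hx0 hU (4:ℝ) (cD 0 hx0),
      iteratedDerivWithin_const_mul hx0 hU (4:ℝ) (cF 0 hx0)]
    simp only [itdw_eq SI_open hx0]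
  rw [hsec, hphic, hphis]
  have eEse : Ese (2*n) = iteratedDeriv m secf 0 := rfl
  have eDC : DC n = iteratedDeriv m Phic 0 := rfl
  have eDS : DS n = iteratedDeriv m Phis 0 := rfl
  rw [eEse, eDC, eDS]
  rw [hlin] at hzero
  linarith

/-! ### the recurrences for the secant numbers -/

def TT (n : ℕ) : ℝ := ∑ m ∈ Finset.Icc 1 n, (-4:ℝ)^(n-m) * Ese (2*m-2)

lemma TT_rec (n : ℕ) : TT (n+1) = Ese (2*n) + (-4) * TT n := by
  rw [TT, show Finset.Icc 1 (n+1) = insert (n+1) (Finset.Icc 1 n) by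
    ext j; simp only [Finset.mem_insert, Finset.mem_Icc]; omega,
    Finset.sum_insert (by simp only [Finset.mem_Icc]; omega)]
  have e1 : (n+1) - (n+1) = 0 := by omega
  have e2 : 2*(n+1) - 2 = 2*n := by omega
  rw [e1, e2, pow_zero, one_mul, TT, Finset.mul_sum]
  congr 1
  apply Finset.sum_congr rfl
  intro m hm
  simp only [Finset.mem_Icc] at hm
  have e3 : (n+1) - m = (n - m) + 1 := by omega
  rw [e3, pow_succ]
  ring

lemma Rprime : ∀ n : ℕ, Ese (2*n) = 2 * TT n + 2 * (-4:ℝ)^n - DC n + DS n := by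
  intro n
  induction n with
  | zero =>
    have hTT : TT 0 = 0 := by simp [TT]
    have hDC : DC 0 = 1 := by simp [DC, iteratedDeriv_zero, Phic, secf, c2f]
    have hDS : DS 0 = 0 := by simp [DS, iteratedDeriv_zero, Phis, s2f]
    rw [hTT, hDC, hDS, Ese_zero]
    norm_num
  | succ n IH =>
    have z := Zid n
    have tr := TT_rec n
    have hp : (-4:ℝ)^(n+1) = (-4:ℝ)^n * (-4) := pow_succ _ _
    rw [tr, hp]
    linarith

lemma bet_zero_eval {n m : ℕ} (h2 : 2 ≤ m) (hmn : m ≤ n) :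
    (bet n m 0 : ℕ) = 1 + 2 * ((2*n).choose (2*(m-1))) + (2*n).choose (2*(m-1)+1) := by
  rw [bet]
  set d := 2*n - 2*m with hd
  have e1 : (0:ℕ) + d + 2 = (d+1) + 1 := by omega
  have e2 : (0:ℕ) + d + 1 = d + 1 := by omega
  rw [e1, e2, Nat.choose_succ_self, Nat.choose_self]
  have e3 : d + 1 + 1 = 2*n - 2*(m-1) := by omega
  have e4 : d + 1 = 2*n - (2*(m-1)+1) := by omega
  rw [e3, e4, Nat.choose_symm (by omega), Nat.choose_symm (by omega)]

lemma Rbeta (n : ℕ) (hn : 1 ≤ n) :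
    Ese (2*n) = (-4:ℝ)^(n-1) * (((2*n-1).choose (2*n-2) : ℕ) : ℝ)
      + ∑ m ∈ Finset.Icc 2 n, (-4:ℝ)^(n-m) * Ese (2*m-2) * ((bet n m 0 : ℕ) : ℝ) := by
  have hR := Rprime n
  -- split DC
  have hsplitDC : Finset.range (n+1) = insert 0 (insert n (Finset.Icc 1 (n-1))) := by
    ext j; simp only [Finset.mem_insert, Finset.mem_Icc, Finset.mem_range]; omega
  have hDC : DC n = (-4:ℝ)^n + Ese (2*n)
      + ∑ j ∈ Finset.Icc 1 (n-1), ((2*n).choose (2*j) : ℝ) * Ese (2*j) * (-4:ℝ)^(n-j) := by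
    rw [DC_closed, hsplitDC,
      Finset.sum_insert (by simp only [Finset.mem_insert, Finset.mem_Icc]; omega),
      Finset.sum_insert (by simp only [Finset.mem_Icc]; omega)]
    simp only [Nat.choose_zero_right, Nat.mul_zero, Ese_zero, Nat.sub_zero, Nat.choose_self,
      Nat.sub_self, pow_zero, Nat.cast_one]
    ring
  -- split DS
  have hsplitDS : Finset.range n = insert 0 (Finset.Icc 1 (n-1)) := by
    ext j; simp only [Finset.mem_insert, Finset.mem_Icc, Finset.mem_range]; omega
  have hDS : DS n = ((2*n).choose 1 : ℝ) * (2 * (-4:ℝ)^(n-1))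
      + ∑ j ∈ Finset.Icc 1 (n-1), ((2*n).choose (2*j+1) : ℝ) * Ese (2*j) * (2 * (-4:ℝ)^(n-1-j)) := by
    rw [DS_closed, hsplitDS, Finset.sum_insert (by simp only [Finset.mem_Icc]; omega)]
    simp only [Nat.mul_zero, Ese_zero, Nat.sub_zero]
    ring
  -- split TT
  have hTT : TT n = (-4:ℝ)^(n-1)
      + ∑ j ∈ Finset.Icc 1 (n-1), (-4:ℝ)^(n-1-j) * Ese (2*j) := by
    rw [TT]
    have hre : ∑ m ∈ Finset.Icc 1 n, (-4:ℝ)^(n-m) * Ese (2*m-2)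
        = ∑ j ∈ Finset.Icc 0 (n-1), (-4:ℝ)^(n-1-j) * Ese (2*j) := by
      apply Finset.sum_nbij' (fun m => m - 1) (fun j => j + 1)
      · intro a ha; simp only [Finset.mem_Icc] at *; omega
      · intro a ha; simp only [Finset.mem_Icc] at *; omega
      · intro a ha; simp only [Finset.mem_Icc] at ha; omega
      · intro a ha; simp only [Finset.mem_Icc] at ha; omega
      · intro a ha
        simp only [Finset.mem_Icc] at ha
        have e1 : n - 1 - (a - 1) = n - a := by omega
        have e2 : 2*(a-1) = 2*a - 2 := by omega
        rw [e1, e2]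
    rw [hre, show Finset.Icc 0 (n-1) = insert 0 (Finset.Icc 1 (n-1)) by
      ext j; simp only [Finset.mem_insert, Finset.mem_Icc]; omega,
      Finset.sum_insert (by simp only [Finset.mem_Icc]; omega)]
    simp only [Nat.mul_zero, Ese_zero, Nat.sub_zero, mul_one]
  -- reindex the target sum
  have htarget : ∑ m ∈ Finset.Icc 2 n, (-4:ℝ)^(n-m) * Ese (2*m-2) * ((bet n m 0 : ℕ) : ℝ)
      = ∑ j ∈ Finset.Icc 1 (n-1), (-4:ℝ)^(n-1-j) * Ese (2*j)
          * ((1 + 2 * ((2*n).choose (2*j)) + (2*n).choose (2*j+1) : ℕ) : ℝ) := by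
    apply Finset.sum_nbij' (fun m => m - 1) (fun j => j + 1)
    · intro a ha; simp only [Finset.mem_Icc] at *; omega
    · intro a ha; simp only [Finset.mem_Icc] at *; omega
    · intro a ha; simp only [Finset.mem_Icc] at ha; omega
    · intro a ha; simp only [Finset.mem_Icc] at ha; omega
    · intro a ha
      simp only [Finset.mem_Icc] at ha
      rw [bet_zero_eval ha.1 ha.2]
      have e1 : n - 1 - (a - 1) = n - a := by omega
      have e2 : 2*(a-1) = 2*a - 2 := by omega
      rw [e1, e2]
  -- the per-term combination
  have hcomb : ∑ j ∈ Finset.Icc 1 (n-1),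
        (2 * ((-4:ℝ)^(n-1-j) * Ese (2*j))
          - ((2*n).choose (2*j) : ℝ) * Ese (2*j) * (-4:ℝ)^(n-j)
          + ((2*n).choose (2*j+1) : ℝ) * Ese (2*j) * (2 * (-4:ℝ)^(n-1-j)))
      = 2 * ∑ j ∈ Finset.Icc 1 (n-1), (-4:ℝ)^(n-1-j) * Ese (2*j)
          * ((1 + 2 * ((2*n).choose (2*j)) + (2*n).choose (2*j+1) : ℕ) : ℝ) := by
    rw [Finset.mul_sum]
    apply Finset.sum_congr rfl
    intro j hj
    simp only [Finset.mem_Icc] at hj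
    have e : n - j = (n-1-j) + 1 := by omega
    rw [e, pow_succ]
    push_cast
    ring
  -- the constant terms
  have hchoose1 : ((2*n-1).choose (2*n-2) : ℕ) = 2*n-1 := by
    have e : 2*n-2 = (2*n-1) - 1 := by omega
    rw [e, Nat.choose_symm (by omega), Nat.choose_one_right]
  have hchoose2 : ((2*n).choose 1 : ℕ) = 2*n := Nat.choose_one_right _
  -- assemble
  rw [hDC, hDS, hTT] at hR
  have hpow : (-4:ℝ)^n = (-4:ℝ)^(n-1) * (-4) := by
    have e : n = (n-1) + 1 := by omega
    conv_lhs => rw [e]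
    rw [pow_succ]
  have hcast1 : ((2*n-1 : ℕ) : ℝ) = 2*(n:ℝ) - 1 := by
    push_cast [Nat.cast_sub (by omega : 1 ≤ 2*n)]; ring
  have hcast2 : ((2*n : ℕ) : ℝ) = 2*(n:ℝ) := by push_cast; ring
  have hsplit2 : ∑ j ∈ Finset.Icc 1 (n-1),
        (2 * ((-4:ℝ)^(n-1-j) * Ese (2*j))
          - ((2*n).choose (2*j) : ℝ) * Ese (2*j) * (-4:ℝ)^(n-j)
          + ((2*n).choose (2*j+1) : ℝ) * Ese (2*j) * (2 * (-4:ℝ)^(n-1-j)))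
      = 2 * (∑ j ∈ Finset.Icc 1 (n-1), (-4:ℝ)^(n-1-j) * Ese (2*j))
        - (∑ j ∈ Finset.Icc 1 (n-1), ((2*n).choose (2*j) : ℝ) * Ese (2*j) * (-4:ℝ)^(n-j))
        + ∑ j ∈ Finset.Icc 1 (n-1), ((2*n).choose (2*j+1) : ℝ) * Ese (2*j) * (2 * (-4:ℝ)^(n-1-j)) := by
    rw [Finset.sum_add_distrib, Finset.sum_sub_distrib, ← Finset.mul_sum]
  have hcombined := (hsplit2.symm).trans hcomb
  rw [hchoose2, hcast2, hpow] at hR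
  rw [htarget, hchoose1, hcast1]
  linear_combination (1/2:ℝ) * hR + (1/2:ℝ) * hcombined

end SecantSide

lemma SqE : ∀ n, 1 ≤ n → ((Sq n : ℚ) : ℝ) = Ese (2*n) := by
  intro n
  induction n using Nat.strong_induction_on with
  | _ n IH =>
    intro hn
    rw [Sq_eq_Atab n hn, Atab, Rbeta n hn]
    push_cast
    congr 1
    · have e : (0:ℕ) + (2*n-2) = 2*n-2 := by omega
      rw [e]
    · apply Finset.sum_congr rfl
      intro m hm
      simp only [Finset.mem_Icc] at hm
      rw [show 2*m-2 = 2*(m-1) by omega, ← IH (m-1) (by omega) (by omega)]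

/-- any solution of the finite difference system (1.2) with initial
conditions [sec1] has row sums equal to the secant numbers. -/
theorem stmt1 (f : ℕ → ℕ → ℚ) (hFD : SatisfiesFD f) (hInit : Sec1 f) :
    ∀ n, 1 ≤ n →
      ((∑ k ∈ Finset.Icc 1 (2 * n - 1), f n k : ℚ) : ℝ) = secantNumber (2 * n) := by
  intro n hn
  rw [rowsum_eq_Sq hFD hInit n hn]
  exact SqE n hn
end
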